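/- arXiv:1602.01306 — 6 statements merged into one kernel-verified Lean document; each statement's English description precedes it below -/
import Mathlib

section
/- Let M be a matroid on a finite ground set E and let A ⊆ E. Then a set F ⊆ E is a minimum-cardinality member of the family {A △ B : B a base of M} if and only if F − A is a base of the contraction M/A and A − F is a base of the restriction of M to A. (Equivalently, with D = M*A, the lower matroid satisfies D_min = (M/A) ⊕ (M restricted to A)^*.) -/
open scoped symmDiff Matroid

namespace PaperMatroid

variable {α : Type}

/-- The contraction `M/C`, defined via duality: `M/C = (M✶ ∖ C)✶`. -/
def contr (M : Matroid α) (C : Set α) : Matroid α := (M✶ ↾ (M.E \ C))✶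

/-- The rank of a set `X`: the size of a largest independent subset of `X`. -/
noncomputable def rkFn (M : Matroid α) (X : Set α) : ℕ :=
  sSup {n : ℕ | ∃ I, M.Indep I ∧ I ⊆ X ∧ n = I.ncard}

/-- `F` is a minimum-cardinality member of the twist family `{A ∆ B : B a base of M}`. -/
def MinTwistMem (M : Matroid α) (A F : Set α) : Prop :=
  (∃ B, M.IsBase B ∧ F = A ∆ B) ∧
    ∀ F', (∃ B, M.IsBase B ∧ F' = A ∆ B) → F.ncard ≤ F'.ncard

/-- `F` is a maximum-cardinality member of the twist family `{A ∆ B : B a base of M}`. -/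
def MaxTwistMem (M : Matroid α) (A F : Set α) : Prop :=
  (∃ B, M.IsBase B ∧ F = A ∆ B) ∧
    ∀ F', (∃ B, M.IsBase B ∧ F' = A ∆ B) → F'.ncard ≤ F.ncard

/-- A circuit of `M`: a minimal dependent set. -/
def IsCircuit (M : Matroid α) (C : Set α) : Prop :=
  C ⊆ M.E ∧ ¬ M.Indep C ∧ ∀ X, X ⊂ C → M.Indep X

/-- The circuit space of `M`: all disjoint unions of circuits (including `∅`). -/
def CircuitSpace (M : Matroid α) : Set (Set α) :=
  {X | ∃ 𝒞 : Finset (Set α), (∀ C ∈ 𝒞, IsCircuit M C) ∧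
        (↑𝒞 : Set (Set α)).Pairwise Disjoint ∧ X = ⋃₀ ↑𝒞}

/-- The bicycle space of `M`: the intersection of the circuit space and the
cocircuit space (the circuit space of the dual). -/
def BicycleSpace (M : Matroid α) : Set (Set α) := CircuitSpace M ∩ CircuitSpace M✶

/-- A matroid is bipartite if every circuit has even cardinality. -/
def Bipartite (M : Matroid α) : Prop := ∀ C, IsCircuit M C → Even C.ncard

/-- A matroid is Eulerian if its ground set is a disjoint union of circuits. -/
def Eulerian (M : Matroid α) : Prop :=
  ∃ 𝒞 : Finset (Set α), (∀ C ∈ 𝒞, IsCircuit M C) ∧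
    (↑𝒞 : Set (Set α)).Pairwise Disjoint ∧ ⋃₀ ↑𝒞 = M.E

/-- Representability of a matroid over a field `K`: there is a map of the ground set
into a `K`-vector space under which a set is independent exactly when its image is
linearly independent. -/
def IsRepresentableOver (M : Matroid α) (K : Type) [Field K] : Prop :=
  ∃ (V : Type) (_ : AddCommGroup V) (_ : Module K V) (φ : α → V),
    ∀ I, I ⊆ M.E → (M.Indep I ↔ LinearIndependent K (I.restrict φ))

/-- A binary matroid: one representable over `GF(2)`. -/
def Binary (M : Matroid α) : Prop := IsRepresentableOver M (ZMod 2)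


section Aux

variable {M : Matroid α} {A B : Set α}

private lemma card_symmDiff (hAfin : A.Finite) (hBfin : B.Finite) :
    (A ∆ B).ncard + (A ∩ B).ncard + (A ∩ B).ncard = A.ncard + B.ncard := by
  rw [Set.symmDiff_def, Set.ncard_union_eq disjoint_sdiff_sdiff hAfin.diff hBfin.diff]
  have h1 := Set.ncard_inter_add_ncard_diff_eq_ncard A B hAfin
  have h2 := Set.ncard_inter_add_ncard_diff_eq_ncard B A hBfin
  rw [Set.inter_comm B A] at h2
  omega

private lemma inter_card_le (hBA : M.IsBasis (B ∩ A) A) {B₂ : Set α} (hB₂ : M.IsBase B₂)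
    (hAfin : A.Finite) : (A ∩ B₂).ncard ≤ (B ∩ A).ncard := by
  obtain ⟨J, hJ, hsub⟩ := (hB₂.indep.subset Set.inter_subset_right).subset_isBasis_of_subset
    Set.inter_subset_left hBA.subset_ground
  have hcard : J.ncard = (B ∩ A).ncard :=
    hJ.restrict_isBase.ncard_eq_ncard_of_isBase hBA.restrict_isBase
  exact hcard ▸ Set.ncard_le_ncard hsub (hAfin.subset hJ.subset)

private lemma exists_base_inter_basis (M : Matroid α) (hA : A ⊆ M.E) :
    ∃ B, M.IsBase B ∧ M.IsBasis (B ∩ A) A := by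
  obtain ⟨I, hI⟩ := M.exists_isBasis A hA
  obtain ⟨B, hB, hIB⟩ := hI.indep.exists_isBase_superset
  have hBA : B ∩ A = I := (hI.eq_of_subset_indep (hB.indep.subset Set.inter_subset_left)
    (Set.subset_inter hIB hI.subset) Set.inter_subset_right).symm
  exact ⟨B, hB, hBA ▸ hI⟩

private lemma key (hB : M.IsBase B) (h : M.IsBasis (B ∩ A) A) :
    M✶.IsBasis ((M.E \ A) \ (B \ A)) (M.E \ A) := by
  have hset : (M.E \ B) ∩ (M.E \ A) = (M.E \ A) \ (B \ A) := by
    ext x; simp only [Set.mem_inter_iff, Set.mem_diff]; tauto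
  rw [← hset]
  exact hB.compl_inter_isBasis_of_inter_isBasis h

end Aux

/-- `F` is a minimum-cardinality member of `{A ∆ B : B a base of M}` iff `F − A` is a
base of `M/A` and `A − F` is a base of the restriction of `M` to `A`. -/
theorem minTwistMem_iff (M : Matroid α) [M.Finite] (A : Set α) (hA : A ⊆ M.E)
    (F : Set α) (hF : F ⊆ M.E) :
    MinTwistMem M A F ↔ (contr M A).IsBase (F \ A) ∧ (M ↾ A).IsBase (A \ F) := by
  have hAfin : A.Finite := M.set_finite A hA
  have hFA : F \ A ⊆ M.E \ A := Set.diff_subset_diff_left hF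
  have hrest : (M ↾ A).IsBase (A \ F) ↔ M.IsBasis (A \ F) A := Matroid.isBase_restrict_iff hA
  have hcontr : (contr M A).IsBase (F \ A) ↔ M✶.IsBasis ((M.E \ A) \ (F \ A)) (M.E \ A) := by
    rw [contr, Matroid.dual_isBase_iff']
    simp only [Matroid.restrict_ground_eq]
    rw [Matroid.isBase_restrict_iff (show M.E \ A ⊆ M✶.E from Set.diff_subset)]
    exact ⟨fun h => h.1, fun h => ⟨h, hFA⟩⟩
  rw [hrest, hcontr]
  constructor
  · rintro ⟨⟨B, hB, rfl⟩, hmin⟩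
    have hBfin : B.Finite := M.set_finite B hB.subset_ground
    have hABF : A \ (A ∆ B) = A ∩ B := by
      ext x; simp only [Set.mem_diff, Set.mem_symmDiff, Set.mem_inter_iff]; tauto
    have hFAB : (A ∆ B) \ A = B \ A := by
      ext x; simp only [Set.mem_diff, Set.mem_symmDiff]; tauto
    obtain ⟨B₀, hB₀, hB₀b⟩ := exists_base_inter_basis M hA
    have hle := hmin (A ∆ B₀) ⟨B₀, hB₀, rfl⟩
    have hcard := card_symmDiff hAfin hBfin
    have hcard₀ := card_symmDiff hAfin (M.set_finite B₀ hB₀.subset_ground)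
    have hBB := hB.ncard_eq_ncard_of_isBase hB₀
    have hle2 : (A ∩ B₀).ncard ≤ (A ∩ B).ncard := by omega
    obtain ⟨J, hJ, hsub⟩ := (hB.indep.subset Set.inter_subset_left).subset_isBasis_of_subset
      Set.inter_subset_right hA
    have hJcard : J.ncard = (B₀ ∩ A).ncard :=
      hJ.restrict_isBase.ncard_eq_ncard_of_isBase hB₀b.restrict_isBase
    have hJle : J.ncard ≤ (B ∩ A).ncard := by
      rw [hJcard, Set.inter_comm B₀ A, Set.inter_comm B A]; exact hle2
    have hJeq : B ∩ A = J :=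
      (Set.eq_of_subset_of_ncard_le hsub hJle (hAfin.subset hJ.subset))
    have hBasis : M.IsBasis (B ∩ A) A := hJeq ▸ hJ
    refine ⟨?_, ?_⟩
    · rw [hFAB]; exact key hB hBasis
    · rw [hABF, Set.inter_comm A B]; exact hBasis
  · rintro ⟨hdualb, hAFb⟩
    obtain ⟨D, hD, hKD⟩ := hdualb.indep.exists_isBase_superset
    have hKeq : D ∩ (M.E \ A) = (M.E \ A) \ (F \ A) :=
      (hdualb.eq_of_subset_indep (hD.indep.subset Set.inter_subset_left)
        (Set.subset_inter hKD hdualb.subset) Set.inter_subset_right).symm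
    have hB₀ : M.IsBase (M.E \ D) := hD.compl_isBase_of_dual
    have hDE : D ⊆ M.E := hD.subset_ground
    have hcompl : (M.E \ (M.E \ D)) ∩ (M.E \ A) = (M.E \ A) \ (F \ A) := by
      rw [Set.diff_diff_cancel_left hDE]; exact hKeq
    have hB₀basis : M.IsBasis ((M.E \ D) ∩ A) A :=
      (hB₀.inter_isBasis_iff_compl_inter_isBasis_dual hA).2 (hcompl ▸ hdualb)
    have hB₀diff : (M.E \ D) \ A = F \ A := by
      have h1 : (M.E \ D) \ A = (M.E \ A) \ (D ∩ (M.E \ A)) := by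
        ext x; simp only [Set.mem_diff, Set.mem_inter_iff]; tauto
      rw [h1, hKeq, Set.diff_diff_cancel_left hFA]
    obtain ⟨B', hB', hIB', hB'sub⟩ := hAFb.indep.exists_isBase_subset_union_isBase hB₀
    have hB'A : B' ∩ A = A \ F :=
      (hAFb.eq_of_subset_indep (hB'.indep.subset Set.inter_subset_left)
        (Set.subset_inter hIB' Set.diff_subset) Set.inter_subset_right).symm
    have hB'basis : M.IsBasis (B' ∩ A) A := by rw [hB'A]; exact hAFb
    have hB'diffsub : B' \ A ⊆ (M.E \ D) \ A := by
      intro x hx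
      rcases hB'sub hx.1 with h | h
      · exact absurd h.1 hx.2
      · exact ⟨h, hx.2⟩
    have hB'fin : B'.Finite := M.set_finite B' hB'.subset_ground
    have hB₀fin : (M.E \ D).Finite := M.set_finite _ hB₀.subset_ground
    have h1 := Set.ncard_inter_add_ncard_diff_eq_ncard B' A hB'fin
    have h2 := Set.ncard_inter_add_ncard_diff_eq_ncard (M.E \ D) A hB₀fin
    have h3 : B'.ncard = (M.E \ D).ncard := hB'.ncard_eq_ncard_of_isBase hB₀
    have h4 : (B' ∩ A).ncard = ((M.E \ D) ∩ A).ncard :=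
      hB'basis.restrict_isBase.ncard_eq_ncard_of_isBase hB₀basis.restrict_isBase
    have h5 : ((M.E \ D) \ A).ncard ≤ (B' \ A).ncard := by omega
    have hB'diff : B' \ A = F \ A := by
      rw [← hB₀diff]
      exact Set.eq_of_subset_of_ncard_le hB'diffsub h5 hB₀fin.diff
    have hFeq : F = A ∆ B' := by
      ext x
      have e1 := Set.ext_iff.1 hB'A x
      have e2 := Set.ext_iff.1 hB'diff x
      simp only [Set.mem_inter_iff, Set.mem_diff] at e1 e2
      rw [Set.mem_symmDiff]
      by_cases hxA : x ∈ A <;> tauto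
    refine ⟨⟨B', hB', hFeq⟩, ?_⟩
    rintro F' ⟨B₂, hB₂, rfl⟩
    have hc1 := card_symmDiff hAfin hB'fin
    have hc2 := card_symmDiff hAfin (M.set_finite B₂ hB₂.subset_ground)
    have hbb := hB'.ncard_eq_ncard_of_isBase hB₂
    have hle : (A ∩ B₂).ncard ≤ (B' ∩ A).ncard := inter_card_le hB'basis hB₂ hAfin
    have hcomm : (A ∩ B').ncard = (B' ∩ A).ncard := by rw [Set.inter_comm]
    rw [hFeq]
    omega


end PaperMatroid
end

section
/- Let M be a matroid on a finite ground set E and let A ⊆ E. Then a set F ⊆ E is a maximum-cardinality member of the family {A △ B : B a base of M} if and only if F − A is a base of the restriction of M to E − A and A − F is a base of the contraction M/(E − A). (Equivalently, with D = M*A, the upper matroid satisfies D_max = (M restricted to E − A) ⊕ (M/(E − A))^*.) -/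
open scoped symmDiff Matroid

namespace PaperMatroid

variable {α : Type}

section Aux
open Set Matroid

lemma key_base_union {M : Matroid α} {A : Set α} (hA : A ⊆ M.E) {I J : Set α}
    (hI : M.IsBasis I (M.E \ A)) (hJ : M✶.IsBasis J A) : M.IsBase (I ∪ (A \ J)) := by
  have hIE : I ⊆ M.E \ A := hI.subset
  have hJA : J ⊆ A := hJ.subset
  obtain ⟨B, hB, hIB⟩ := hI.indep.exists_isBase_superset
  obtain ⟨B', hB', hJB', hB'u⟩ := hJ.indep.exists_isBase_subset_union_isBase hB.compl_isBase_dual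
  have hBA : J = B' ∩ A :=
    hJ.eq_of_subset_indep (hB'.indep.subset inter_subset_left)
      (subset_inter hJB' hJA) inter_subset_right
  have h2 : M✶.IsBasis (B' ∩ A) A := hBA ▸ hJ
  have h3 := hB'.compl_inter_isBasis_of_inter_isBasis h2
  rw [dual_dual, dual_ground] at h3
  have hI2 : I ⊆ (M.E \ B') ∩ (M.E \ A) := by
    intro x hx
    have hxE : x ∈ M.E \ A := hIE hx
    refine ⟨⟨hxE.1, fun hxB' => ?_⟩, hxE⟩
    rcases hB'u hxB' with h | h
    · exact hxE.2 (hJA h)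
    · exact h.2 (hIB hx)
  have hIeq : I = (M.E \ B') ∩ (M.E \ A) :=
    hI.eq_of_subset_indep h3.indep hI2 inter_subset_right
  have hset : M.E \ B' = I ∪ (A \ J) := by
    rw [hIeq, hBA]
    ext x
    simp only [mem_diff, mem_union, mem_inter_iff]
    constructor
    · rintro ⟨hxE, hxB⟩
      by_cases hxA : x ∈ A
      · exact Or.inr ⟨hxA, fun h => hxB h.1⟩
      · exact Or.inl ⟨⟨hxE, hxB⟩, ⟨hxE, hxA⟩⟩
    · rintro (⟨⟨h1, h2⟩, _⟩ | ⟨hxA, hxJ⟩)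
      · exact ⟨h1, h2⟩
      · exact ⟨hA hxA, fun hB'x => hxJ ⟨hB'x, hxA⟩⟩
  rw [← hset]
  exact hB'.compl_isBase_of_dual

lemma ncard_symmDiff_eq {A B : Set α} (hA : A.Finite) (hB : B.Finite) :
    (A ∆ B).ncard + (A ∩ B).ncard + (A ∩ B).ncard = A.ncard + B.ncard := by
  have h1 : (A ∆ B).ncard = (A \ B).ncard + (B \ A).ncard := by
    rw [Set.symmDiff_def]
    exact ncard_union_eq disjoint_sdiff_sdiff hA.diff hB.diff
  have h2 := ncard_inter_add_ncard_diff_eq_ncard A B hA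
  have h3 := ncard_inter_add_ncard_diff_eq_ncard B A hB
  rw [inter_comm B A] at h3
  omega

lemma basis_ncard_eq {M : Matroid α} {I J X : Set α} (hI : M.IsBasis I X) (hJ : M.IsBasis J X) :
    I.ncard = J.ncard :=
  hI.isBase_restrict.ncard_eq_ncard_of_isBase hJ.isBase_restrict

theorem maxTwistMem_iff' (M : Matroid α) [M.Finite] (A : Set α) (hA : A ⊆ M.E)
    (F : Set α) (hF : F ⊆ M.E) :
    ((∃ B, M.IsBase B ∧ F = A ∆ B) ∧
      ∀ F', (∃ B, M.IsBase B ∧ F' = A ∆ B) → F'.ncard ≤ F.ncard) ↔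
    (M ↾ (M.E \ A)).IsBase (F \ A) ∧ (contr M (M.E \ A)).IsBase (A \ F) := by
  have hfin : M.E.Finite := M.ground_finite
  have hAfin : A.Finite := hfin.subset hA
  have hEX : M.E \ (M.E \ A) = A := diff_diff_cancel_left hA
  have hAE' : A ⊆ M✶.E := by rw [dual_ground]; exact hA
  have hR1 : (M ↾ (M.E \ A)).IsBase (F \ A) ↔ M.IsBasis (F \ A) (M.E \ A) := by
    rw [isBase_restrict_iff', isBasis'_iff_isBasis diff_subset]
  have hR2 : (contr M (M.E \ A)).IsBase (A \ F) ↔ M✶.IsBasis (A ∩ F) A := by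
    have hc : contr M (M.E \ A) = (M✶ ↾ A)✶ := by rw [contr, hEX]
    rw [hc, dual_isBase_iff', restrict_ground_eq, diff_diff_right_self,
      isBase_restrict_iff', isBasis'_iff_isBasis hAE', and_iff_left diff_subset]
  rw [hR1, hR2]
  constructor
  · rintro ⟨⟨B, hB, rfl⟩, hmax⟩
    have hBE := hB.subset_ground
    have hs1 : (A ∆ B) \ A = B ∩ (M.E \ A) := by
      ext x
      simp only [mem_symmDiff, mem_diff, mem_inter_iff]
      constructor
      · rintro ⟨⟨h1, h2⟩ | ⟨h1, h2⟩, h3⟩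
        · exact absurd h1 h3
        · exact ⟨h1, hBE h1, h2⟩
      · rintro ⟨h1, h2, h3⟩
        exact ⟨Or.inr ⟨h1, h3⟩, h3⟩
    have hs2 : A ∩ (A ∆ B) = A \ B := by
      ext x; simp only [mem_symmDiff, mem_inter_iff, mem_diff]; tauto
    obtain ⟨J, hJ⟩ := M✶.exists_isBasis A hAE'
    obtain ⟨I, hI⟩ := M.exists_isBasis (M.E \ A) diff_subset
    have hB₀ := key_base_union hA hI hJ
    have hm := hmax (A ∆ (I ∪ (A \ J))) ⟨_, hB₀, rfl⟩
    have hBfin : B.Finite := hfin.subset hBE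
    have hB₀fin : (I ∪ (A \ J)).Finite := hfin.subset hB₀.subset_ground
    have e1 := ncard_symmDiff_eq hAfin hBfin
    have e0 := ncard_symmDiff_eq hAfin hB₀fin
    have ecard : B.ncard = (I ∪ (A \ J)).ncard := hB.ncard_eq_ncard_of_isBase hB₀
    have hs3 : A ∩ (I ∪ (A \ J)) = A \ J := by
      ext x
      simp only [mem_inter_iff, mem_union, mem_diff]
      constructor
      · rintro ⟨hxA, hxI | h⟩
        · exact absurd hxA (hI.subset hxI).2
        · exact h
      · intro h; exact ⟨h.1, Or.inr h⟩
    have hs3c : (A ∩ (I ∪ (A \ J))).ncard = (A \ J).ncard := by rw [hs3]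
    have eAJ : (A ∩ J).ncard + (A \ J).ncard = A.ncard :=
      ncard_inter_add_ncard_diff_eq_ncard A J hAfin
    have hAJ : A ∩ J = J := inter_eq_self_of_subset_right hJ.subset
    rw [hAJ] at eAJ
    have eAB := ncard_inter_add_ncard_diff_eq_ncard A B hAfin
    have hABindep : M✶.Indep (A \ B) :=
      hB.compl_isBase_dual.indep.subset (diff_subset_diff_left hA)
    obtain ⟨J', hJ', hsubJ'⟩ := hABindep.subset_isBasis_of_subset diff_subset hAE'
    have hJJ' : J'.ncard = J.ncard := basis_ncard_eq hJ' hJ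
    have hJ'fin : J'.Finite := hAfin.subset hJ'.subset
    have hJ'le := ncard_le_ncard hsubJ' hJ'fin
    have hABeq : A \ B = J' := eq_of_subset_of_ncard_le hsubJ' (by omega) hJ'fin
    have hdual : M✶.IsBasis (A \ B) A := hABeq ▸ hJ'
    constructor
    · rw [hs1, hB.inter_isBasis_iff_compl_inter_isBasis_dual diff_subset, hEX]
      have heq : (M.E \ B) ∩ A = A \ B := by
        ext x
        simp only [mem_inter_iff, mem_diff]
        exact ⟨fun ⟨⟨_, h2⟩, h3⟩ => ⟨h3, h2⟩, fun ⟨h1, h2⟩ => ⟨⟨hA h1, h2⟩, h1⟩⟩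
      rw [heq]
      exact hdual
    · rw [hs2]
      exact hdual
  · rintro ⟨h1, h2⟩
    have hBbase : M.IsBase ((F \ A) ∪ (A \ F)) := by
      have := key_base_union hA h1 h2
      rwa [diff_self_inter] at this
    have hFeq : F = A ∆ ((F \ A) ∪ (A \ F)) := by
      ext x
      simp only [mem_symmDiff, mem_union, mem_diff]
      tauto
    refine ⟨⟨_, hBbase, hFeq⟩, ?_⟩
    rintro F' ⟨B', hB', rfl⟩
    have hBfin : ((F \ A) ∪ (A \ F)).Finite := hfin.subset hBbase.subset_ground
    have hB'fin : B'.Finite := hfin.subset hB'.subset_ground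
    have e1 := ncard_symmDiff_eq hAfin hB'fin
    have e0 := ncard_symmDiff_eq hAfin hBfin
    have ecard : ((F \ A) ∪ (A \ F)).ncard = B'.ncard := hBbase.ncard_eq_ncard_of_isBase hB'
    have hs3 : A ∩ ((F \ A) ∪ (A \ F)) = A \ F := by
      ext x
      simp only [mem_inter_iff, mem_union, mem_diff]
      tauto
    have hs3c : (A ∩ ((F \ A) ∪ (A \ F))).ncard = (A \ F).ncard := by rw [hs3]
    have eAF := ncard_inter_add_ncard_diff_eq_ncard A F hAfin
    have eAB' := ncard_inter_add_ncard_diff_eq_ncard A B' hAfin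
    have hind : M✶.Indep (A \ B') :=
      hB'.compl_isBase_dual.indep.subset (diff_subset_diff_left hA)
    obtain ⟨J', hJ', hsub⟩ := hind.subset_isBasis_of_subset diff_subset hAE'
    have hJ'c : J'.ncard = (A ∩ F).ncard := basis_ncard_eq hJ' h2
    have hle : (A \ B').ncard ≤ J'.ncard := ncard_le_ncard hsub (hAfin.subset hJ'.subset)
    have hFc : F.ncard = (A ∆ ((F \ A) ∪ (A \ F))).ncard := by rw [← hFeq]
    omega


end Aux

/-- `F` is a maximum-cardinality member of `{A ∆ B : B a base of M}` iff `F − A` is a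
base of the restriction of `M` to `E − A` and `A − F` is a base of `M/(E − A)`. -/
theorem maxTwistMem_iff (M : Matroid α) [M.Finite] (A : Set α) (hA : A ⊆ M.E)
    (F : Set α) (hF : F ⊆ M.E) :
    MaxTwistMem M A F ↔ (M ↾ (M.E \ A)).IsBase (F \ A) ∧ (contr M (M.E \ A)).IsBase (A \ F) :=
  maxTwistMem_iff' M A hA F hF

end PaperMatroid
end

section
/- Let M be a matroid on a finite ground set E that is representable over a field K, and let A ⊆ E. If N is a matroid on E whose bases are exactly the minimum-cardinality members of {A △ B : B a base of M}, then N is representable over K; likewise, if N' is a matroid on E whose bases are exactly the maximum-cardinality members of {A △ B : B a base of M}, then N' is representable over K. (That is, (M*A)_min and (M*A)_max are representable over every field over which M is.) -/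
open scoped symmDiff Matroid

namespace PaperMatroid

variable {α : Type}

open Set Submodule Matroid

variable {K V : Type} [Field K] [AddCommGroup V] [Module K V]
variable {M : Matroid α} {φ : α → V}

lemma quot_li_iff {ι : Type} [Fintype ι] (v : ι → V) (U : Submodule K V) :
    (LinearIndependent K fun i => U.mkQ (v i)) ↔
      LinearIndependent K v ∧ Disjoint (span K (Set.range v)) U := by
  constructor
  · intro h
    refine ⟨h.of_comp U.mkQ, disjoint_def.2 fun x hx hxU => ?_⟩
    obtain ⟨c, hc⟩ := (mem_span_range_iff_exists_fun K).1 hx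
    have h0 : ∑ i, c i • U.mkQ (v i) = 0 := by
      simp_rw [← map_smul, ← map_sum, hc]
      simpa using hxU
    have := Fintype.linearIndependent_iff.1 h c h0
    rw [← hc]
    simp [this]
  · rintro ⟨hv, hd⟩
    exact hv.map (by rw [Submodule.ker_mkQ]; exact hd)

lemma li_union_iff {s t : Set α} (hst : Disjoint s t) (f : α → V) :
    (LinearIndependent K fun x : ↥(s ∪ t) => f x) ↔
      (LinearIndependent K fun x : s => f x) ∧ (LinearIndependent K fun x : t => f x) ∧
        Disjoint (span K (f '' s)) (span K (f '' t)) := by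
  classical
  rw [← linearIndependent_equiv (Equiv.Set.union hst).symm, linearIndependent_sum]
  have h1 : ((fun x : ↥(s ∪ t) => f x) ∘ (Equiv.Set.union hst).symm) ∘ Sum.inl
      = fun x : s => f x := by
    funext x; simp
  have h2 : ((fun x : ↥(s ∪ t) => f x) ∘ (Equiv.Set.union hst).symm) ∘ Sum.inr
      = fun x : t => f x := by
    funext x; simp
  rw [h1, h2]
  have r1 : Set.range (fun x : s => f x) = f '' s := Set.range_restrict f s
  have r2 : Set.range (fun x : t => f x) = f '' t := Set.range_restrict f t
  rw [r1, r2]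


lemma dual_sep {X Y : Set V} (hXY : X ⊆ Y) :
    span K X = span K Y ↔
      ∀ f : Module.Dual K V, (∀ x ∈ X, f x = 0) → ∀ y ∈ Y, f y = 0 := by
  constructor
  · intro h f hf y hy
    have hXk : span K X ≤ LinearMap.ker f := span_le.2 fun x hx => hf x hx
    have : y ∈ span K X := h ▸ subset_span hy
    exact hXk this
  · intro h
    refine le_antisymm (span_mono hXY) (span_le.2 fun y hy => ?_)
    by_contra h'
    obtain ⟨f, hfy, hmap⟩ :=
      Submodule.exists_dual_map_eq_bot_of_notMem h' inferInstance
    refine hfy (h f (fun x hx => ?_) y hy)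
    have : f x ∈ Submodule.map f (span K X) :=
      Submodule.mem_map_of_mem (subset_span hx)
    rw [hmap] at this
    simpa using this

/-- The "row space" of the family `u` on coordinates `A`. -/
noncomputable def rowSp (K : Type) [Field K] {V : Type} [AddCommGroup V] [Module K V]
    (u : α → V) (A : Set α) : Submodule K (↥A → K) :=
  LinearMap.range (LinearMap.pi fun a : ↥A => LinearMap.applyₗ (u ↑a))

lemma mem_rowSp_iff {u : α → V} {A : Set α} {x : ↥A → K} :
    x ∈ rowSp K u A ↔ ∃ f : Module.Dual K V, ∀ a : ↥A, x a = f (u ↑a) := by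
  constructor
  · rintro ⟨f, rfl⟩
    exact ⟨f, fun a => by simp [LinearMap.pi_apply]⟩
  · rintro ⟨f, hf⟩
    exact ⟨f, by funext a; simp [LinearMap.pi_apply, (hf a).symm]⟩

lemma dualpart_li_iff {A S : Set α} [DecidableEq ↥A] [Fintype ↥A] [Fintype ↥S]
    (hS : S ⊆ A) (u : α → V) :
    (LinearIndependent K fun a : ↥S =>
        (rowSp K u A).mkQ (Pi.single (Set.inclusion hS a) 1)) ↔
      span K (u '' (A \ S)) = span K (u '' A) := by
  set v : ↥S → (↥A → K) := fun a => Pi.single (Set.inclusion hS a) 1 with hv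
  have hδ : LinearIndependent K v := by
    have h1 : (fun a : ↥S => (Pi.basisFun K ↥A) (Set.inclusion hS a)) = v := by
      funext a; rw [Pi.basisFun_apply]
    exact h1 ▸ (Pi.basisFun K ↥A).linearIndependent.comp (Set.inclusion hS)
      (Set.inclusion_injective hS)
  rw [quot_li_iff v (rowSp K u A)]
  rw [dual_sep (Set.image_mono Set.diff_subset)]
  simp only [hδ, true_and]
  have hsupp : ∀ x ∈ span K (Set.range v), ∀ a : ↥A, (↑a ∉ S) → x a = 0 := by
    intro x hx a ha
    obtain ⟨c, rfl⟩ := (mem_span_range_iff_exists_fun K).1 hx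
    rw [Finset.sum_apply]
    refine Finset.sum_eq_zero fun i _ => ?_
    have hne : a ≠ Set.inclusion hS i := by
      intro h
      rw [h] at ha
      exact ha i.2
    simp [hv, Pi.single_eq_of_ne hne]
  have hsupp2 : ∀ x : ↥A → K, (∀ a : ↥A, (↑a ∉ S) → x a = 0) →
      x ∈ span K (Set.range v) := by
    intro x hx
    rw [← Finset.univ_sum_single x]
    refine sum_mem fun a _ => ?_
    by_cases h : (↑a : α) ∈ S
    · have : Pi.single a (x a) = x a • v ⟨↑a, h⟩ := by
        have : Set.inclusion hS ⟨↑a, h⟩ = a := rfl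
        rw [hv]
        simp only [this]
        rw [← Pi.single_smul, smul_eq_mul, mul_one]
      rw [this]
      exact smul_mem _ _ (subset_span (Set.mem_range_self _))
    · rw [hx a h]
      simp
  constructor
  · intro hd f hfX y hyY
    obtain ⟨a, haA, rfl⟩ := hyY
    have hmem : (fun b : ↥A => f (u ↑b)) ∈ span K (Set.range v) := by
      refine hsupp2 _ fun b hb => hfX _ ⟨↑b, ⟨b.2, hb⟩, rfl⟩
    have h0 : (fun b : ↥A => f (u ↑b)) = 0 :=
      disjoint_def.1 hd _ hmem (mem_rowSp_iff.2 ⟨f, fun a => rfl⟩)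
    exact congrFun h0 ⟨a, haA⟩
  · intro h
    rw [disjoint_def]
    intro x hx hxR
    obtain ⟨f, hf⟩ := mem_rowSp_iff.1 hxR
    have hfX : ∀ z ∈ u '' (A \ S), f z = 0 := by
      rintro _ ⟨b, hb, rfl⟩
      rw [← hf ⟨b, hb.1⟩]
      exact hsupp x hx ⟨b, hb.1⟩ hb.2
    funext a
    rw [hf a]
    exact h f hfX _ ⟨↑a, a.2, rfl⟩


lemma card_le_basis {M : Matroid α} {I J X : Set α} (hI : M.IsBasis I X)
    (hJ : M.Indep J) (hJX : J ⊆ X) : J.encard ≤ I.encard := by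
  by_contra hlt
  push_neg at hlt
  obtain ⟨e, he, hins⟩ := hI.indep.augment hJ hlt
  exact he.2 (hI.mem_of_insert_indep (hJX he.1) hins)

lemma basis_of_card {M : Matroid α} [M.Finite] {I J X : Set α} (hI : M.IsBasis I X)
    (hJ : M.Indep J) (hJX : J ⊆ X) (hc : I.encard ≤ J.encard) : M.IsBasis J X := by
  obtain ⟨J', hJ', hJJ'⟩ := hJ.subset_isBasis_of_subset hJX hI.subset_ground
  have hcard : J'.encard ≤ J.encard := (hJ'.encard_eq_encard hI) ▸ hc
  have hfin : J'.Finite := M.set_finite J' hJ'.indep.subset_ground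
  have hEq := hfin.eq_of_subset_of_encard_le' hJJ' hcard
  rwa [hEq]

/-- Decoupling: if some basis of `A` is compatible with `T`, all are. -/
lemma decouple {M : Matroid α} {I₁ I₂ A T : Set α} (hA : A ⊆ M.E)
    (hI₁ : M.IsBasis I₁ A) (hI₂ : M.IsBasis I₂ A) (hT : Disjoint T A) (hTfin : T.Finite)
    (hTE : T ⊆ M.E) (h : M.Indep (I₂ ∪ T)) : M.Indep (I₁ ∪ T) := by
  refine Set.Finite.induction_on (motive := fun T _ =>
      Disjoint T A → T ⊆ M.E → M.Indep (I₂ ∪ T) → M.Indep (I₁ ∪ T))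
    T hTfin (fun _ _ _ => by simpa using hI₁.indep) ?_ hT hTE h
  intro a s has hsfin IH hdisj hsE hind
  rw [union_insert] at hind ⊢
  have hdisj' : Disjoint s A := hdisj.mono_left (subset_insert a s)
  have haA : a ∉ A := Set.disjoint_left.1 hdisj (mem_insert a s)
  have hind2 : M.Indep (I₂ ∪ s) := hind.subset (insert_subset_iff.1 (by
    exact insert_subset (mem_insert _ _) (subset_insert _ _))).2
  have hind2 : M.Indep (I₂ ∪ s) := hind.subset (subset_insert _ _)
  have h1 : M.Indep (I₁ ∪ s) := IH hdisj' ((subset_insert a s).trans hsE) hind2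
  have haI₂s : a ∉ I₂ ∪ s := by
    rintro (h | h)
    · exact haA (hI₂.subset h)
    · exact has h
  have hacl : a ∈ M.E \ M.closure (I₂ ∪ s) :=
    (hind2.insert_indep_iff.1 hind).resolve_right haI₂s
  have hclEq : M.closure (I₁ ∪ s) = M.closure (I₂ ∪ s) := by
    rw [← closure_union_closure_left_eq, hI₁.closure_eq_closure,
      ← hI₂.closure_eq_closure, closure_union_closure_left_eq]
  rw [← hclEq] at hacl
  exact h1.insert_indep_iff.2 (Or.inl hacl)

lemma base_of_card {M : Matroid α} [M.Finite] {B J : Set α} (hB : M.IsBase B)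
    (hJ : M.Indep J) (hc : B.encard ≤ J.encard) : M.IsBase J := by
  obtain ⟨B', hB', hJB'⟩ := hJ.exists_isBase_superset
  have hle : B'.encard ≤ J.encard := (hB'.encard_eq_encard_of_isBase hB) ▸ hc
  have hEq := (M.set_finite B' hB'.subset_ground).eq_of_subset_of_encard_le' hJB' hle
  rwa [hEq]

lemma symmdiff_card {E A B : Set α} (hE : E.Finite) (hA : A ⊆ E) (hB : B ⊆ E) :
    (A ∆ B).ncard + (A ∩ B).ncard + (A ∩ B).ncard = A.ncard + B.ncard := by
  have hAf := hE.subset hA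
  have hBf := hE.subset hB
  have hsd : A ∆ B = (A \ B) ∪ (B \ A) := Set.symmDiff_def A B
  rw [hsd, Set.ncard_union_eq disjoint_sdiff_sdiff hAf.diff hBf.diff]
  have h1 := Set.ncard_inter_add_ncard_diff_eq_ncard A B hAf
  have h2 := Set.ncard_inter_add_ncard_diff_eq_ncard B A hBf
  rw [Set.inter_comm B A] at h2
  omega

lemma encard_le_of_ncard_le {A B : Set α} (hA : A.Finite) (hB : B.Finite)
    (h : A.ncard ≤ B.ncard) : A.encard ≤ B.encard := by
  rw [← hA.cast_ncard_eq, ← hB.cast_ncard_eq]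
  exact_mod_cast h

lemma ncard_le_of_encard_le {A B : Set α} (hA : A.Finite) (hB : B.Finite)
    (h : A.encard ≤ B.encard) : A.ncard ≤ B.ncard := by
  rw [← hA.cast_ncard_eq, ← hB.cast_ncard_eq] at h
  exact_mod_cast h

lemma minTwist_iff {M : Matroid α} [M.Finite] {A F : Set α} (hA : A ⊆ M.E) :
    MinTwistMem M A F ↔ ∃ B, M.IsBase B ∧ M.IsBasis (A ∩ B) A ∧ F = A ∆ B := by
  have hE := M.ground_finite
  constructor
  · rintro ⟨⟨B, hB, rfl⟩, hmin⟩
    obtain ⟨I, hI⟩ := M.exists_isBasis A hA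
    obtain ⟨B₀, hB₀, hIB₀⟩ := hI.indep.exists_isBase_superset
    have hABI : A ∩ B₀ = I :=
      (hI.eq_of_subset_indep (hB₀.indep.subset inter_subset_right)
        (subset_inter hI.subset hIB₀) inter_subset_left).symm
    have hmin' := hmin (A ∆ B₀) ⟨B₀, hB₀, rfl⟩
    have id1 := symmdiff_card hE hA hB.subset_ground
    have id2 := symmdiff_card hE hA hB₀.subset_ground
    have hBB₀ := hB.ncard_eq_ncard_of_isBase hB₀
    have hcard : (A ∩ B₀).ncard ≤ (A ∩ B).ncard := by omega
    refine ⟨B, hB, ?_, rfl⟩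
    refine basis_of_card (hABI ▸ hI) (hB.indep.subset inter_subset_right) inter_subset_left
      (encard_le_of_ncard_le (hE.subset (inter_subset_left.trans hA))
        (hE.subset (inter_subset_left.trans hA)) hcard)
  · rintro ⟨B, hB, hbasis, rfl⟩
    refine ⟨⟨B, hB, rfl⟩, ?_⟩
    rintro F' ⟨B', hB', rfl⟩
    have hcard := card_le_basis hbasis (hB'.indep.subset inter_subset_right) inter_subset_left
    have hcard' : (A ∩ B').ncard ≤ (A ∩ B).ncard :=
      ncard_le_of_encard_le (hE.subset (inter_subset_left.trans hA))
        (hE.subset (inter_subset_left.trans hA)) hcard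
    have id1 := symmdiff_card hE hA hB.subset_ground
    have id2 := symmdiff_card hE hA hB'.subset_ground
    have hBB' := hB.ncard_eq_ncard_of_isBase hB'
    omega

lemma maxTwist_iff {M : Matroid α} [M.Finite] {A F : Set α} (hA : A ⊆ M.E) :
    MaxTwistMem M A F ↔ ∃ B, M.IsBase B ∧ M.IsBasis (B \ A) (M.E \ A) ∧ F = A ∆ B := by
  have hE := M.ground_finite
  have hdb : ∀ B : Set α, B ⊆ M.E → (B ∩ A).ncard + (B \ A).ncard = B.ncard :=
    fun B hB => Set.ncard_inter_add_ncard_diff_eq_ncard B A (hE.subset hB)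
  constructor
  · rintro ⟨⟨B, hB, rfl⟩, hmax⟩
    obtain ⟨J, hJ⟩ := M.exists_isBasis (M.E \ A) diff_subset
    obtain ⟨B₀, hB₀, hJB₀⟩ := hJ.indep.exists_isBase_superset
    have hBJ : B₀ \ A = J :=
      (hJ.eq_of_subset_indep (hB₀.indep.diff A)
        (subset_diff.2 ⟨hJB₀, (subset_diff.1 hJ.subset).2⟩)
        (diff_subset_diff_left hB₀.subset_ground)).symm
    have hmax' := hmax (A ∆ B₀) ⟨B₀, hB₀, rfl⟩
    have id1 := symmdiff_card hE hA hB.subset_ground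
    have id2 := symmdiff_card hE hA hB₀.subset_ground
    have hBB₀ := hB.ncard_eq_ncard_of_isBase hB₀
    have hd1 := hdb B hB.subset_ground
    have hd2 := hdb B₀ hB₀.subset_ground
    have hic : ∀ C : Set α, (A ∩ C).ncard = (C ∩ A).ncard := fun C => by rw [Set.inter_comm]
    have hic1 := hic B
    have hic2 := hic B₀
    have hcard : (B₀ \ A).ncard ≤ (B \ A).ncard := by omega
    refine ⟨B, hB, ?_, rfl⟩
    refine basis_of_card (hBJ ▸ hJ) (hB.indep.diff A)
      (diff_subset_diff_left hB.subset_ground)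
      (encard_le_of_ncard_le (hE.subset (diff_subset.trans hB₀.subset_ground))
        (hE.subset (diff_subset.trans hB.subset_ground)) hcard)
  · rintro ⟨B, hB, hbasis, rfl⟩
    refine ⟨⟨B, hB, rfl⟩, ?_⟩
    rintro F' ⟨B', hB', rfl⟩
    have hcard := card_le_basis hbasis (hB'.indep.diff A)
      (diff_subset_diff_left hB'.subset_ground)
    have hcard' : (B' \ A).ncard ≤ (B \ A).ncard :=
      ncard_le_of_encard_le (hE.subset (diff_subset.trans hB'.subset_ground))
        (hE.subset (diff_subset.trans hB.subset_ground)) hcard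
    have id1 := symmdiff_card hE hA hB.subset_ground
    have id2 := symmdiff_card hE hA hB'.subset_ground
    have hBB' := hB.ncard_eq_ncard_of_isBase hB'
    have hd1 := hdb B hB.subset_ground
    have hd2 := hdb B' hB'.subset_ground
    have hic : ∀ C : Set α, (A ∩ C).ncard = (C ∩ A).ncard := fun C => by rw [Set.inter_comm]
    have hic1 := hic B
    have hic2 := hic B'
    omega

lemma minN_indep {M : Matroid α} [M.Finite] {A : Set α} (hA : A ⊆ M.E) {N : Matroid α}
    (hN : ∀ B, N.IsBase B ↔ MinTwistMem M A B) {S : Set α} (hS : S ⊆ M.E) :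
    N.Indep S ↔
      (∃ I, M.IsBasis I A ∧ I ⊆ A \ S) ∧ (∃ I, M.IsBasis I A ∧ M.Indep (I ∪ (S \ A))) := by
  rw [Matroid.indep_iff]
  constructor
  · rintro ⟨F, hF, hSF⟩
    rw [hN, minTwist_iff hA] at hF
    obtain ⟨B, hB, hbasis, rfl⟩ := hF
    have hsub1 : A ∩ B ⊆ A \ S := by
      rintro x ⟨hxA, hxB⟩
      refine ⟨hxA, fun hxS => ?_⟩
      have hmem := hSF hxS
      rw [Set.mem_symmDiff] at hmem
      tauto
    have hsub2 : S \ A ⊆ B := by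
      rintro x ⟨hxS, hxA⟩
      have hmem := hSF hxS
      rw [Set.mem_symmDiff] at hmem
      tauto
    exact ⟨⟨_, hbasis, hsub1⟩, ⟨_, hbasis,
      hB.indep.subset (union_subset inter_subset_right hsub2)⟩⟩
  · rintro ⟨⟨I₁, hI₁, hI₁AS⟩, ⟨I₂, hI₂, hI₂ind⟩⟩
    have hTE : S \ A ⊆ M.E := diff_subset.trans hS
    have hind : M.Indep (I₁ ∪ (S \ A)) :=
      decouple hA hI₁ hI₂ disjoint_sdiff_left (M.set_finite _ hTE) hTE hI₂ind
    obtain ⟨B, hB, hsub⟩ := hind.exists_isBase_superset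
    have hABI : A ∩ B = I₁ :=
      (hI₁.eq_of_subset_indep (hB.indep.subset inter_subset_right)
        (subset_inter hI₁.subset (subset_union_left.trans hsub)) inter_subset_left).symm
    refine ⟨A ∆ B, (hN _).2 ((minTwist_iff hA).2 ⟨B, hB, hABI ▸ hI₁, rfl⟩), ?_⟩
    intro x hxS
    rw [Set.mem_symmDiff]
    by_cases hxA : x ∈ A
    · refine Or.inl ⟨hxA, fun hxB => ?_⟩
      have hxI₁ : x ∈ I₁ := hABI ▸ (⟨hxA, hxB⟩ : x ∈ A ∩ B)
      exact (hI₁AS hxI₁).2 hxS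
    · exact Or.inr ⟨hsub (Or.inr ⟨hxS, hxA⟩), hxA⟩

lemma maxN_indep {M : Matroid α} [M.Finite] {A : Set α} (hA : A ⊆ M.E) {N : Matroid α}
    (hN : ∀ B, N.IsBase B ↔ MaxTwistMem M A B) {S : Set α} (hS : S ⊆ M.E) :
    N.Indep S ↔
      M.Indep (S \ A) ∧
        ∃ I J, I ⊆ A \ S ∧ M.IsBasis J (M.E \ A) ∧ M.IsBase (I ∪ J) := by
  rw [Matroid.indep_iff]
  constructor
  · rintro ⟨F, hF, hSF⟩
    rw [hN, maxTwist_iff hA] at hF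
    obtain ⟨B, hB, hbasis, rfl⟩ := hF
    have hsub1 : A ∩ B ⊆ A \ S := by
      rintro x ⟨hxA, hxB⟩
      refine ⟨hxA, fun hxS => ?_⟩
      have hmem := hSF hxS
      rw [Set.mem_symmDiff] at hmem
      tauto
    have hsub2 : S \ A ⊆ B \ A := by
      rintro x ⟨hxS, hxA⟩
      have hmem := hSF hxS
      rw [Set.mem_symmDiff] at hmem
      exact ⟨by tauto, hxA⟩
    have hBeq : (A ∩ B) ∪ (B \ A) = B := by
      rw [Set.inter_comm, Set.inter_union_diff]
    exact ⟨hB.indep.subset (hsub2.trans diff_subset), A ∩ B, B \ A, hsub1, hbasis,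
      by rw [hBeq]; exact hB⟩
  · rintro ⟨hSA, I, J, hIAS, hJ, hBase⟩
    have hSAE : S \ A ⊆ M.E \ A := diff_subset_diff_left hS
    obtain ⟨J', hJ', hSJ'⟩ := hSA.subset_isBasis_of_subset hSAE diff_subset
    have hIA : I ⊆ A := hIAS.trans diff_subset
    have hIdisj : Disjoint I (M.E \ A) :=
      Set.disjoint_left.mpr fun {x} hxI hx => hx.2 (hIA hxI)
    have hIE : I ⊆ M.E := hIA.trans hA
    have hind : M.Indep (J' ∪ I) :=
      decouple diff_subset hJ' hJ hIdisj (M.set_finite _ hIE) hIE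
        (by rw [Set.union_comm]; exact hBase.indep)
    have hJJ' : J.encard = J'.encard := hJ.encard_eq_encard hJ'
    have hdisj1 : Disjoint I J := Set.disjoint_of_subset_right hJ.subset hIdisj
    have hdisj2 : Disjoint I J' := Set.disjoint_of_subset_right hJ'.subset hIdisj
    have hcard : (I ∪ J).encard ≤ (I ∪ J').encard := by
      rw [Set.encard_union_eq hdisj1, Set.encard_union_eq hdisj2, hJJ']
    have hBase' : M.IsBase (I ∪ J') :=
      base_of_card hBase (by rwa [Set.union_comm] at hind) hcard
    have hJ'A : J' \ A = J' := by
      ext x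
      exact ⟨fun h => h.1, fun h => ⟨h, (hJ'.subset h).2⟩⟩
    have hBdiff : (I ∪ J') \ A = J' := by
      rw [Set.union_diff_distrib, Set.diff_eq_empty.2 hIA, hJ'A, Set.empty_union]
    refine ⟨A ∆ (I ∪ J'), (hN _).2 ((maxTwist_iff hA).2
      ⟨I ∪ J', hBase', by rw [hBdiff]; exact hJ', rfl⟩), ?_⟩
    intro x hxS
    rw [Set.mem_symmDiff]
    by_cases hxA : x ∈ A
    · refine Or.inl ⟨hxA, ?_⟩
      rintro (hxI | hxJ')
      · exact (hIAS hxI).2 hxS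
      · exact (hJ'.subset hxJ').2 hxA
    · exact Or.inr ⟨Or.inr (hSJ' ⟨hxS, hxA⟩), hxA⟩


section Bridges

variable (hrep : ∀ I, I ⊆ M.E → (M.Indep I ↔ LinearIndependent K (I.restrict φ)))
include hrep

lemma li_of_indep {I : Set α} (hI : M.Indep I) :
    LinearIndependent K (fun x : ↥I => φ ↑x) :=
  (hrep I hI.subset_ground).1 hI

lemma span_basis {I X : Set α} (hI : M.IsBasis I X) (hX : X ⊆ M.E) :
    span K (φ '' I) = span K (φ '' X) := by
  refine le_antisymm (span_mono (Set.image_mono hI.subset)) (span_le.2 ?_)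
  rintro _ ⟨x, hx, rfl⟩
  by_cases hxI : x ∈ I
  · exact subset_span (Set.mem_image_of_mem _ hxI)
  · have hdep := (hI.insert_dep ⟨hx, hxI⟩).not_indep
    have hni : ¬ LinearIndependent K (fun y : ↥(insert x I) => φ ↑y) := fun h =>
      hdep ((hrep _ (insert_subset (hX hx) hI.indep.subset_ground)).2 h)
    rw [show (LinearIndependent K fun y : ↥(insert x I) => φ ↑y) ↔ _ from linearIndepOn_insert hxI] at hni
    push_neg at hni
    exact hni (li_of_indep hrep hI.indep)

lemma basis_of_span {I X : Set α} (hI : M.Indep I) (hIX : I ⊆ X) (hX : X ⊆ M.E)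
    (hsp : span K (φ '' X) ≤ span K (φ '' I)) : M.IsBasis I X := by
  refine hI.isBasis_of_forall_insert hIX fun e he => ?_
  rw [← Matroid.not_indep_iff (insert_subset (hX he.1) hI.subset_ground)]
  intro hind
  have hli : LinearIndependent K fun y : ↥(insert e I) => φ ↑y :=
    (hrep _ (insert_subset (hX he.1) hI.subset_ground)).1 hind
  rw [show (LinearIndependent K fun y : ↥(insert e I) => φ ↑y) ↔ _ from linearIndepOn_insert he.2] at hli
  exact hli.2 (hsp (subset_span (Set.mem_image_of_mem φ he.1)))

lemma base_iff_span {B : Set α} (hB : M.Indep B) :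
    M.IsBase B ↔ span K (φ '' M.E) ≤ span K (φ '' B) := by
  rw [← Matroid.isBasis_ground_iff]
  exact ⟨fun h => (span_basis hrep h Subset.rfl).ge,
    fun h => basis_of_span hrep hB hB.subset_ground Subset.rfl h⟩

lemma bridge_min {A S : Set α} (hA : A ⊆ M.E) :
    (∃ I, M.IsBasis I A ∧ I ⊆ A \ S) ↔ span K (φ '' (A \ S)) = span K (φ '' A) := by
  constructor
  · rintro ⟨I, hI, hIAS⟩
    refine le_antisymm (span_mono (Set.image_mono diff_subset)) ?_
    rw [← span_basis hrep hI hA]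
    exact span_mono (Set.image_mono hIAS)
  · intro hsp
    obtain ⟨I, hI⟩ := M.exists_isBasis (A \ S) (diff_subset.trans hA)
    refine ⟨I, basis_of_span hrep hI.indep (hI.subset.trans diff_subset) hA ?_, hI.subset⟩
    rw [span_basis hrep hI (diff_subset.trans hA), hsp]

lemma bridge_contract {A T : Set α} (hA : A ⊆ M.E) (hT : T ⊆ M.E) (hdisj : Disjoint T A) :
    (∃ I, M.IsBasis I A ∧ M.Indep (I ∪ T)) ↔
      (LinearIndependent K fun x : ↥T => φ ↑x) ∧
        Disjoint (span K (φ '' T)) (span K (φ '' A)) := by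
  have key : ∀ I, M.IsBasis I A →
      (M.Indep (I ∪ T) ↔ (LinearIndependent K fun x : ↥T => φ ↑x) ∧
        Disjoint (span K (φ '' T)) (span K (φ '' A))) := by
    intro I hI
    have hd : Disjoint I T := Set.disjoint_of_subset_left hI.subset hdisj.symm
    rw [show (M.Indep (I ∪ T) ↔ LinearIndependent K fun x : ↥(I ∪ T) => φ ↑x) from
      hrep _ (union_subset hI.indep.subset_ground hT), li_union_iff hd φ,
      span_basis hrep hI hA]
    have := li_of_indep hrep hI.indep
    tauto
  constructor
  · rintro ⟨I, hI, hind⟩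
    exact (key I hI).1 hind
  · intro h
    obtain ⟨I, hI⟩ := M.exists_isBasis A hA
    exact ⟨I, hI, (key I hI).2 h⟩

lemma bridge_max {A S : Set α} (hA : A ⊆ M.E) :
    (∃ I J, I ⊆ A \ S ∧ M.IsBasis J (M.E \ A) ∧ M.IsBase (I ∪ J)) ↔
      span K (φ '' (A \ S)) ⊔ span K (φ '' (M.E \ A)) = span K (φ '' M.E) := by
  have hsplit : ∀ X Y : Set α, span K (φ '' (X ∪ Y)) = span K (φ '' X) ⊔ span K (φ '' Y) := by
    intro X Y
    rw [Set.image_union, Submodule.span_union]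
  constructor
  · rintro ⟨I, J, hIAS, hJ, hB⟩
    have hJE : J ⊆ M.E := hJ.subset.trans diff_subset
    have hIE : I ⊆ M.E := hIAS.trans (diff_subset.trans hA)
    have h1 : span K (φ '' M.E) ≤ span K (φ '' (I ∪ J)) :=
      (base_iff_span hrep hB.indep).1 hB
    have h2 : span K (φ '' (I ∪ J)) ≤ span K (φ '' (A \ S)) ⊔ span K (φ '' (M.E \ A)) := by
      rw [hsplit, span_basis hrep hJ diff_subset]
      exact sup_le_sup_right (span_mono (Set.image_mono hIAS)) _
    refine le_antisymm (sup_le ?_ ?_) (h1.trans h2)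
    · exact span_mono (Set.image_mono (diff_subset.trans hA))
    · exact span_mono (Set.image_mono diff_subset)
  · intro hsp
    obtain ⟨J, hJ⟩ := M.exists_isBasis (M.E \ A) diff_subset
    obtain ⟨B, hB, hJB⟩ := hJ.indep.subset_isBasis_of_subset
      (subset_union_right (s := A \ S)) (union_subset (diff_subset.trans hA) (hJ.subset.trans diff_subset))
    refine ⟨B \ J, J, fun x hx => (hB.subset hx.1).resolve_right hx.2, hJ, ?_⟩
    have hBspan : span K (φ '' M.E) ≤ span K (φ '' B) := by
      rw [span_basis hrep hB (union_subset (diff_subset.trans hA)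
        (hJ.subset.trans diff_subset)), hsplit, span_basis hrep hJ diff_subset, hsp]
    have hbase : M.IsBase B := (base_iff_span hrep hB.indep).2 hBspan
    rwa [Set.diff_union_of_subset hJB]

end Bridges


lemma span_quot_eq_iff {U' p q : Submodule K V} :
    map U'.mkQ p = map U'.mkQ q ↔ p ⊔ U' = q ⊔ U' := by
  have hbot : map U'.mkQ U' = ⊥ := by
    rw [eq_bot_iff]
    rintro _ ⟨x, hx, rfl⟩
    simpa using (Submodule.Quotient.mk_eq_zero U').2 hx
  constructor
  · intro h
    have := congrArg (comap U'.mkQ) h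
    rw [comap_map_mkQ, comap_map_mkQ] at this
    rw [sup_comm p U', sup_comm q U', this]
  · intro h
    have h1 : map U'.mkQ (p ⊔ U') = map U'.mkQ (q ⊔ U') := by rw [h]
    rwa [Submodule.map_sup, Submodule.map_sup, hbot, sup_bot_eq, sup_bot_eq] at h1

lemma disjoint_prod_embed {W₁ W₂ : Type} [AddCommGroup W₁] [Module K W₁]
    [AddCommGroup W₂] [Module K W₂] {s t : Set (W₁ × W₂)}
    (hs : ∀ x ∈ s, x.1 = 0) (ht : ∀ x ∈ t, x.2 = 0) :
    Disjoint (span K s) (span K t) := by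
  have h1 : span K s ≤ Submodule.prod ⊥ ⊤ := span_le.2 fun x hx => ⟨hs x hx, trivial⟩
  have h2 : span K t ≤ Submodule.prod ⊤ ⊥ := span_le.2 fun x hx => ⟨trivial, ht x hx⟩
  refine (disjoint_def.2 fun x hx1 hx2 => ?_).mono h1 h2
  obtain ⟨hx1', -⟩ := hx1
  obtain ⟨-, hx2'⟩ := hx2
  exact Prod.ext hx1' hx2'


-- rep_min / rep_max (to be concatenated)
lemma rep_min {M : Matroid α} [M.Finite]
    (hM : IsRepresentableOver M K) {A : Set α} (hA : A ⊆ M.E)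
    (N : Matroid α) (hNE : N.E = M.E) (hN : ∀ B, N.IsBase B ↔ MinTwistMem M A B) :
    IsRepresentableOver N K := by
  classical
  obtain ⟨V, _, _, φ, hrep⟩ := hM
  have hE : M.E.Finite := M.ground_finite
  haveI : Fintype ↥A := (hE.subset hA).fintype
  set U : Submodule K V := span K (φ '' A) with hU
  set Rsp : Submodule K (↥A → K) := rowSp K φ A with hRsp
  refine ⟨(V ⧸ U) × ((↥A → K) ⧸ Rsp), inferInstance, inferInstance,
    fun x => if h : x ∈ A then (0, Rsp.mkQ (Pi.single (⟨x, h⟩ : ↥A) 1))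
      else (U.mkQ (φ x), 0), ?_⟩
  set ψ : α → (V ⧸ U) × ((↥A → K) ⧸ Rsp) :=
    fun x => if h : x ∈ A then (0, Rsp.mkQ (Pi.single (⟨x, h⟩ : ↥A) 1))
      else (U.mkQ (φ x), 0) with hψ
  intro S hSN
  have hS : S ⊆ M.E := hNE ▸ hSN
  haveI : Fintype ↥(S ∩ A) := (hE.subset (inter_subset_left.trans hS)).fintype
  haveI : Fintype ↥(S \ A) := (hE.subset (diff_subset.trans hS)).fintype
  have hdisjSA : Disjoint (S ∩ A) (S \ A) :=
    Set.disjoint_left.mpr fun {x} hx1 hx2 => hx2.2 hx1.2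
  have hTE : S \ A ⊆ M.E := diff_subset.trans hS
  have hTdisj : Disjoint (S \ A) A := disjoint_sdiff_left
  -- component (a)
  have ha_eq : (fun x : ↥(S ∩ A) => ψ ↑x) =
      (LinearMap.inr K (V ⧸ U) ((↥A → K) ⧸ Rsp)) ∘
        (fun x : ↥(S ∩ A) => Rsp.mkQ
          (Pi.single (Set.inclusion (inter_subset_right : S ∩ A ⊆ A) x) 1)) := by
    funext x
    simp only [hψ, Function.comp_apply, dif_pos x.2.2]
    rfl
  have ha : (LinearIndependent K fun x : ↥(S ∩ A) => ψ ↑x) ↔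
      span K (φ '' (A \ S)) = span K (φ '' A) := by
    rw [ha_eq, LinearMap.linearIndependent_iff (LinearMap.inr K (V ⧸ U) ((↥A → K) ⧸ Rsp)) (Submodule.ker_inr),
      dualpart_li_iff (inter_subset_right) φ, Set.diff_inter_self_eq_diff]
  -- component (b)
  have hb_eq : (fun x : ↥(S \ A) => ψ ↑x) =
      (LinearMap.inl K (V ⧸ U) ((↥A → K) ⧸ Rsp)) ∘
        (fun x : ↥(S \ A) => U.mkQ (φ ↑x)) := by
    funext x
    simp only [hψ, Function.comp_apply, dif_neg x.2.2]
    rfl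
  have hrange : Set.range (fun x : ↥(S \ A) => φ ↑x) = φ '' (S \ A) :=
    Set.range_restrict φ (S \ A)
  have hb : (LinearIndependent K fun x : ↥(S \ A) => ψ ↑x) ↔
      (LinearIndependent K fun x : ↥(S \ A) => φ ↑x) ∧
        Disjoint (span K (φ '' (S \ A))) (span K (φ '' A)) := by
    rw [hb_eq, LinearMap.linearIndependent_iff (LinearMap.inl K (V ⧸ U) ((↥A → K) ⧸ Rsp)) (Submodule.ker_inl),
      quot_li_iff (fun x : ↥(S \ A) => φ ↑x) U, hrange, hU]
  -- component (c)
  have hc : Disjoint (span K (ψ '' (S ∩ A))) (span K (ψ '' (S \ A))) := by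
    refine disjoint_prod_embed ?_ ?_
    · rintro _ ⟨x, hx, rfl⟩; simp [hψ, dif_pos hx.2]
    · rintro _ ⟨x, hx, rfl⟩; simp [hψ, dif_neg hx.2]
  have hSsplit : LinearIndependent K (S.restrict ψ) ↔
      LinearIndependent K (fun x : ↥((S ∩ A) ∪ (S \ A)) => ψ ↑x) := by
    rw [Set.inter_union_diff]
    rfl
  rw [minN_indep hA hN hS, hSsplit, li_union_iff hdisjSA ψ]
  rw [bridge_min hrep hA, bridge_contract hrep hA hTE hTdisj]
  simp only [ha, hb, hc, and_true]

lemma rep_max {M : Matroid α} [M.Finite]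
    (hM : IsRepresentableOver M K) {A : Set α} (hA : A ⊆ M.E)
    (N : Matroid α) (hNE : N.E = M.E) (hN : ∀ B, N.IsBase B ↔ MaxTwistMem M A B) :
    IsRepresentableOver N K := by
  classical
  obtain ⟨V, _, _, φ, hrep⟩ := hM
  have hE : M.E.Finite := M.ground_finite
  haveI : Fintype ↥A := (hE.subset hA).fintype
  set U' : Submodule K V := span K (φ '' (M.E \ A)) with hU'
  set u : α → V ⧸ U' := fun x => U'.mkQ (φ x) with hu
  set Rsp : Submodule K (↥A → K) := rowSp K u A with hRsp
  refine ⟨V × ((↥A → K) ⧸ Rsp), inferInstance, inferInstance,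
    fun x => if h : x ∈ A then (0, Rsp.mkQ (Pi.single (⟨x, h⟩ : ↥A) 1))
      else (φ x, 0), ?_⟩
  set ψ : α → V × ((↥A → K) ⧸ Rsp) :=
    fun x => if h : x ∈ A then (0, Rsp.mkQ (Pi.single (⟨x, h⟩ : ↥A) 1))
      else (φ x, 0) with hψ
  intro S hSN
  have hS : S ⊆ M.E := hNE ▸ hSN
  haveI : Fintype ↥(S ∩ A) := (hE.subset (inter_subset_left.trans hS)).fintype
  have hdisjSA : Disjoint (S ∩ A) (S \ A) :=
    Set.disjoint_left.mpr fun {x} hx1 hx2 => hx2.2 hx1.2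
  have hTE : S \ A ⊆ M.E := diff_subset.trans hS
  -- component (a)
  have ha_eq : (fun x : ↥(S ∩ A) => ψ ↑x) =
      (LinearMap.inr K V ((↥A → K) ⧸ Rsp)) ∘
        (fun x : ↥(S ∩ A) => Rsp.mkQ
          (Pi.single (Set.inclusion (inter_subset_right : S ∩ A ⊆ A) x) 1)) := by
    funext x
    simp only [hψ, Function.comp_apply, dif_pos x.2.2]
    rfl
  have ha : (LinearIndependent K fun x : ↥(S ∩ A) => ψ ↑x) ↔
      span K (u '' (A \ S)) = span K (u '' A) := by
    rw [ha_eq, LinearMap.linearIndependent_iff (LinearMap.inr K V ((↥A → K) ⧸ Rsp))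
      Submodule.ker_inr, dualpart_li_iff (inter_subset_right) u,
      Set.diff_inter_self_eq_diff]
  have hspan : (span K (u '' (A \ S)) = span K (u '' A)) ↔
      (span K (φ '' (A \ S)) ⊔ span K (φ '' (M.E \ A)) = span K (φ '' M.E)) := by
    have him : ∀ X : Set α, u '' X = U'.mkQ '' (φ '' X) := fun X => by
      rw [hu, ← Set.image_comp]; rfl
    rw [him, him, Submodule.span_image, Submodule.span_image, span_quot_eq_iff]
    have hAE : span K (φ '' A) ⊔ U' = span K (φ '' M.E) := by
      rw [hU', ← Submodule.span_union, ← Set.image_union, Set.union_diff_cancel hA]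
    rw [hAE]
  -- component (b)
  have hb_eq : (fun x : ↥(S \ A) => ψ ↑x) =
      (LinearMap.inl K V ((↥A → K) ⧸ Rsp)) ∘ (fun x : ↥(S \ A) => φ ↑x) := by
    funext x
    simp only [hψ, Function.comp_apply, dif_neg x.2.2]
    rfl
  have hb : (LinearIndependent K fun x : ↥(S \ A) => ψ ↑x) ↔ M.Indep (S \ A) := by
    rw [hb_eq, LinearMap.linearIndependent_iff (LinearMap.inl K V ((↥A → K) ⧸ Rsp))
      Submodule.ker_inl]
    exact (hrep _ hTE).symm
  -- component (c)
  have hc : Disjoint (span K (ψ '' (S ∩ A))) (span K (ψ '' (S \ A))) := by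
    refine disjoint_prod_embed ?_ ?_
    · rintro _ ⟨x, hx, rfl⟩; simp [hψ, dif_pos hx.2]
    · rintro _ ⟨x, hx, rfl⟩; simp [hψ, dif_neg hx.2]
  have hSsplit : LinearIndependent K (S.restrict ψ) ↔
      LinearIndependent K (fun x : ↥((S ∩ A) ∪ (S \ A)) => ψ ↑x) := by
    rw [Set.inter_union_diff]
    rfl
  rw [maxN_indep hA hN hS, bridge_max hrep hA, hSsplit, li_union_iff hdisjSA ψ]
  rw [ha, hspan, hb]
  simp only [hc, and_true]
  exact and_comm

/-- If `M` is representable over `K`, then so are `(M*A)_min` and `(M*A)_max`. -/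
theorem twist_min_max_representable (M : Matroid α) [M.Finite] (K : Type) [Field K]
    (hM : IsRepresentableOver M K) (A : Set α) (hA : A ⊆ M.E) :
    (∀ N : Matroid α, N.E = M.E → (∀ B, N.IsBase B ↔ MinTwistMem M A B) →
      IsRepresentableOver N K) ∧
    (∀ N' : Matroid α, N'.E = M.E → (∀ B, N'.IsBase B ↔ MaxTwistMem M A B) →
      IsRepresentableOver N' K) :=
  ⟨fun N hNE hN => rep_min hM hA N hNE hN, fun N' hNE hN' => rep_max hM hA N' hNE hN'⟩

end PaperMatroid
end

section
/- Let D = (E,𝓕) be a delta-matroid, let A ⊆ E, and let s₀ = min{|B ∩ A| : B ∈ 𝓕_min(D)}. Then every feasible set F ∈ 𝓕 satisfies |F ∩ A| ≥ s₀. -/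
open scoped symmDiff

structure SetSystem (α : Type) [DecidableEq α] where
  E : Finset α
  F : Finset (Finset α)

namespace SetSystem

variable {α : Type} [DecidableEq α]

/-- A delta-matroid: nonempty collection of feasible subsets of the ground set
satisfying the symmetric exchange axiom. -/
def IsDeltaMatroid (D : SetSystem α) : Prop :=
  D.F.Nonempty ∧ (∀ F ∈ D.F, F ⊆ D.E) ∧
    ∀ X ∈ D.F, ∀ Y ∈ D.F, ∀ u ∈ X ∆ Y, ∃ v ∈ X ∆ Y, X ∆ ({u, v} : Finset α) ∈ D.F

/-- A matroid, viewed as a delta-matroid whose feasible sets are equicardinal. -/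
def IsMatroid (D : SetSystem α) : Prop :=
  D.IsDeltaMatroid ∧ ∀ F₁ ∈ D.F, ∀ F₂ ∈ D.F, F₁.card = F₂.card

/-- The twist `D*A`. -/
def twist (D : SetSystem α) (A : Finset α) : SetSystem α :=
  ⟨D.E, D.F.image fun F => A ∆ F⟩

/-- The dual `D* := D * E`. -/
def dual (D : SetSystem α) : SetSystem α := D.twist D.E

def IsLoop (D : SetSystem α) (e : α) : Prop := ∀ F ∈ D.F, e ∉ F

def IsColoop (D : SetSystem α) (e : α) : Prop := ∀ F ∈ D.F, e ∈ F

open Classical in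
/-- Deletion of a single element (when `e` is a coloop, `D∖e := D/e`). -/
noncomputable def del (D : SetSystem α) (e : α) : SetSystem α :=
  if D.IsColoop e then ⟨D.E.erase e, D.F.image fun F => F.erase e⟩
  else ⟨D.E.erase e, D.F.filter fun F => e ∉ F⟩

open Classical in
/-- Contraction of a single element (when `e` is a loop, `D/e := D∖e`). -/
noncomputable def con (D : SetSystem α) (e : α) : SetSystem α :=
  if D.IsLoop e then ⟨D.E.erase e, D.F.filter fun F => e ∉ F⟩
  else ⟨D.E.erase e, (D.F.filter fun F => e ∈ F).image fun F => F.erase e⟩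

/-- Loop complementation on a single element. -/
def lc (D : SetSystem α) (e : α) : SetSystem α :=
  ⟨D.E, D.F ∆ ((D.F.filter fun F => e ∉ F).image fun F => insert e F)⟩

/-- Loop complementation on a set of elements (applied in some order;
the operation is order-independent). -/
noncomputable def lcSet (D : SetSystem α) (A : Finset α) : SetSystem α :=
  A.toList.foldl lc D

/-- The dual pivot `D *̄ A := ((D*A)+A)*A`. -/
noncomputable def dpivot (D : SetSystem α) (A : Finset α) : SetSystem α :=
  ((D.twist A).lcSet A).twist A

/-- Set systems reachable from `D` by sequences of twists and loop complementations. -/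
inductive Reachable : SetSystem α → SetSystem α → Prop
  | refl (D : SetSystem α) : Reachable D D
  | twist (D D' : SetSystem α) (A : Finset α) (hA : A ⊆ D'.E) :
      Reachable D D' → Reachable D (D'.twist A)
  | lc (D D' : SetSystem α) (A : Finset α) (hA : A ⊆ D'.E) :
      Reachable D D' → Reachable D (D'.lcSet A)

/-- A vf-safe delta-matroid: any sequence of twists and loop complementations
yields a delta-matroid. -/
def VfSafe (D : SetSystem α) : Prop := ∀ D', Reachable D D' → D'.IsDeltaMatroid

/-- The minimum-cardinality feasible sets. -/
def Fmin (D : SetSystem α) : Finset (Finset α) :=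
  D.F.filter fun F => ∀ F' ∈ D.F, F.card ≤ F'.card

/-- The maximum-cardinality feasible sets. -/
def Fmax (D : SetSystem α) : Finset (Finset α) :=
  D.F.filter fun F => ∀ F' ∈ D.F, F'.card ≤ F.card

/-- The lower matroid `D_min`. -/
def Dmin (D : SetSystem α) : SetSystem α := ⟨D.E, D.Fmin⟩

def IsRibbonLoop (D : SetSystem α) (e : α) : Prop := ∀ F ∈ D.Fmin, e ∉ F

def IsNonorientableRL (D : SetSystem α) (e : α) : Prop :=
  D.IsRibbonLoop e ∧ (D.twist {e}).IsRibbonLoop e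

def IsOrientableRL (D : SetSystem α) (e : α) : Prop :=
  D.IsRibbonLoop e ∧ (D.dpivot {e}).IsRibbonLoop e

def IsTrivialOrientableRL (D : SetSystem α) (e : α) : Prop :=
  D.IsOrientableRL e ∧ D.IsLoop e

def IsTrivialNonorientableRL (D : SetSystem α) (e : α) : Prop :=
  D.IsNonorientableRL e ∧ (D.lc e).IsLoop e


/-- Auxiliary: for every feasible set `F` there is a minimum-cardinality feasible
set `B` with `|B ∩ A| ≤ |F ∩ A|`. -/
lemma exists_fmin_inter_card_le (D : SetSystem α) (hD : D.IsDeltaMatroid)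
    (A F : Finset α) (hF : F ∈ D.F) :
    ∃ B ∈ D.Fmin, (B ∩ A).card ≤ (F ∩ A).card := by
  -- Fmin is nonempty
  obtain ⟨B₀, hB₀F, hB₀min⟩ := Finset.exists_min_image D.F Finset.card hD.1
  have hB₀ : B₀ ∈ D.Fmin := Finset.mem_filter.2 ⟨hB₀F, hB₀min⟩
  suffices H : ∀ n : ℕ, ∀ B ∈ D.Fmin, (B ∆ F).card ≤ n →
      ∃ B' ∈ D.Fmin, (B' ∩ A).card ≤ (F ∩ A).card from
    H _ B₀ hB₀ le_rfl
  intro n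
  induction n with
  | zero =>
    intro B hB hcard
    have hBF : B = F := by
      have : B ∆ F = ∅ := Finset.card_eq_zero.1 (Nat.le_zero.1 hcard)
      simpa [symmDiff_eq_bot] using this
    exact ⟨B, hB, by rw [hBF]⟩
  | succ n ih =>
    intro B hB hcard
    by_cases hle : (B ∩ A).card ≤ (F ∩ A).card
    · exact ⟨B, hB, hle⟩
    push_neg at hle
    have hBmem : B ∈ D.F := (Finset.mem_filter.1 hB).1
    have hBmin : ∀ F' ∈ D.F, B.card ≤ F'.card := (Finset.mem_filter.1 hB).2
    -- find u ∈ (B ∩ A) \ F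
    have hnsub : ¬ (B ∩ A ⊆ F ∩ A) := fun h => absurd (Finset.card_le_card h) (not_le.2 hle)
    obtain ⟨u, huBA, huFA⟩ := Finset.not_subset.1 hnsub
    have huB : u ∈ B := (Finset.mem_inter.1 huBA).1
    have huA : u ∈ A := (Finset.mem_inter.1 huBA).2
    have huF : u ∉ F := fun h => huFA (Finset.mem_inter.2 ⟨h, huA⟩)
    have huXY : u ∈ B ∆ F := Finset.mem_symmDiff.2 (Or.inl ⟨huB, huF⟩)
    obtain ⟨v, hv, hBv⟩ := hD.2.2 B hBmem F hF u huXY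
    rcases Finset.mem_symmDiff.1 hv with ⟨hvB, hvF⟩ | ⟨hvF, hvB⟩
    · -- v ∈ B: the exchange would produce a smaller feasible set, contradiction
      exfalso
      have hsub : B ∆ ({u, v} : Finset α) ⊆ B.erase u := by
        intro x hx
        rcases Finset.mem_symmDiff.1 hx with ⟨hxB, hxuv⟩ | ⟨hxuv, hxB⟩
        · refine Finset.mem_erase.2 ⟨?_, hxB⟩
          intro h; exact hxuv (by simp [h])
        · rcases Finset.mem_insert.1 hxuv with h | h
          · exact absurd (h ▸ huB) hxB
          · exact absurd ((Finset.mem_singleton.1 h) ▸ hvB) hxB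
      have h1 : (B ∆ ({u, v} : Finset α)).card ≤ B.card - 1 := by
        calc (B ∆ ({u, v} : Finset α)).card ≤ (B.erase u).card := Finset.card_le_card hsub
        _ = B.card - 1 := Finset.card_erase_of_mem huB
      have h2 : B.card ≤ (B ∆ ({u, v} : Finset α)).card := hBmin _ hBv
      have h3 : 1 ≤ B.card := Finset.card_pos.2 ⟨u, huB⟩
      omega
    · -- v ∈ F \ B: swap u for v, staying in Fmin and getting closer to F
      have hne : v ≠ u := fun h => hvB (h ▸ huB)
      set B' := B ∆ ({u, v} : Finset α) with hB'def
      have hB'eq : B' = insert v (B.erase u) := by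
        ext x
        simp only [hB'def, Finset.mem_symmDiff, Finset.mem_insert, Finset.mem_singleton,
          Finset.mem_erase]
        constructor
        · rintro (⟨hxB, hxuv⟩ | ⟨(rfl | rfl), hxB⟩)
          · exact Or.inr ⟨fun h => hxuv (Or.inl h), hxB⟩
          · exact absurd huB hxB
          · exact Or.inl rfl
        · rintro (rfl | ⟨hxu, hxB⟩)
          · exact Or.inr ⟨Or.inr rfl, hvB⟩
          · exact Or.inl ⟨hxB, by rintro (h | h) <;> [exact hxu h; exact hvB (h ▸ hxB)]⟩
      have hvnB : v ∉ B.erase u := fun h => hvB (Finset.mem_of_mem_erase h)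
      have hcardB' : B'.card = B.card := by
        rw [hB'eq, Finset.card_insert_of_notMem hvnB, Finset.card_erase_of_mem huB]
        have : 1 ≤ B.card := Finset.card_pos.2 ⟨u, huB⟩
        omega
      have hB'min : B' ∈ D.Fmin :=
        Finset.mem_filter.2 ⟨hBv, fun F' hF' => hcardB' ▸ hBmin F' hF'⟩
      -- B' ∆ F = (B ∆ F) \ {u, v}
      have hsd : B' ∆ F = (B ∆ F) \ ({u, v} : Finset α) := by
        ext x
        by_cases hxu : x = u
        · subst hxu
          simp [hB'def, Finset.mem_symmDiff, huB, huF]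
        by_cases hxv : x = v
        · subst hxv
          simp [hB'def, Finset.mem_symmDiff, hvB, hvF]
        · simp only [hB'def, Finset.mem_symmDiff, Finset.mem_sdiff, Finset.mem_insert,
            Finset.mem_singleton, hxu, hxv]
          tauto
      have huvsub : ({u, v} : Finset α) ⊆ B ∆ F := by
        intro x hx
        rcases Finset.mem_insert.1 hx with rfl | hx
        · exact huXY
        · rw [Finset.mem_singleton] at hx
          subst hx
          exact Finset.mem_symmDiff.2 (Or.inr ⟨hvF, hvB⟩)
      have hcarduv : ({u, v} : Finset α).card = 2 := by
        rw [Finset.card_insert_of_notMem (by simpa using hne.symm), Finset.card_singleton]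
      have hcardsd : (B' ∆ F).card = (B ∆ F).card - 2 := by
        rw [hsd, Finset.card_sdiff_of_subset huvsub, hcarduv]
      have hpos : 1 ≤ (B ∆ F).card := Finset.card_pos.2 ⟨u, huXY⟩
      exact ih B' hB'min (by omega)

/-- Every feasible set of a delta-matroid meets `A` in at least
`s₀ = min {|B ∩ A| : B ∈ 𝓕_min(D)}` elements. -/
theorem card_inter_ge_min (D : SetSystem α) (hD : D.IsDeltaMatroid)
    (A : Finset α) (hA : A ⊆ D.E) (s₀ : ℕ)
    (hs : IsLeast {n : ℕ | ∃ B ∈ D.Fmin, n = (B ∩ A).card} s₀) :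
    ∀ F ∈ D.F, s₀ ≤ (F ∩ A).card := by
  intro F hF
  obtain ⟨B, hB, hle⟩ := exists_fmin_inter_card_le D hD A F hF
  have : s₀ ≤ (B ∩ A).card := hs.2 ⟨B, hB, rfl⟩
  omega

end SetSystem
end

section
/- Let D = (E,𝓕) be a delta-matroid and let A be a nonempty proper subset of E. Then all members of {A △ F : F ∈ 𝓕} have the same cardinality (i.e. the twist D*A is a matroid) if and only if both of the following hold: (1) A is separating in D_min, i.e. for all F₁, F₂ ∈ 𝓕_min(D), the set (F₁ ∩ A) ∪ (F₂ − A) belongs to 𝓕_min(D); and (2) the families {F − A : F ∈ 𝓕, |F ∩ A| ≤ |F' ∩ A| for all F' ∈ 𝓕} and {F − (E−A) : F ∈ 𝓕, |F ∩ (E−A)| ≤ |F' ∩ (E−A)| for all F' ∈ 𝓕} each consist of equicardinal sets (i.e. D∖A and D∖(E−A) are matroids). -/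
open scoped symmDiff

namespace SetSystem

variable {α : Type} [DecidableEq α]

/-- The feasible sets of the deletion `D ∖ A`:
`{F − A : F ∈ 𝓕, |F ∩ A| ≤ |F' ∩ A| for all F' ∈ 𝓕}`. -/
def delFam (D : SetSystem α) (A : Finset α) : Finset (Finset α) :=
  (D.F.filter fun F => ∀ F' ∈ D.F, (F ∩ A).card ≤ (F' ∩ A).card).image fun F => F \ A


section AuxLemmas

variable {α : Type} [DecidableEq α]

private lemma symmDiff_card_aux (A F : Finset α) :
    ((A ∆ F).card : ℤ) + (F ∩ A).card = (A.card : ℤ) + (F \ A).card := by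
  have h1 : A ∆ F = (A \ F) ∪ (F \ A) := by
    ext x
    simp only [Finset.mem_symmDiff, Finset.mem_union, Finset.mem_sdiff]
  have hd : Disjoint (A \ F) (F \ A) := by
    rw [Finset.disjoint_left]
    intro x hx hx'
    rw [Finset.mem_sdiff] at hx hx'
    exact hx.2 hx'.1
  have h2 : (A ∆ F).card = (A \ F).card + (F \ A).card := by
    rw [h1, Finset.card_union_of_disjoint hd]
  have h3 : (A \ F).card + (A ∩ F).card = A.card := Finset.card_sdiff_add_card_inter A F
  have h4 : A ∩ F = F ∩ A := Finset.inter_comm A F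
  rw [h4] at h3
  omega

private lemma erase_inter_aux (X A : Finset α) (u : α) :
    (X.erase u) ∩ A = (X ∩ A).erase u := by
  ext x
  simp only [Finset.mem_inter, Finset.mem_erase]
  tauto

private lemma erase_sdiff_mem_aux (X A : Finset α) {u : α} (huA : u ∈ A) :
    (X.erase u) \ A = X \ A := by
  ext x
  simp only [Finset.mem_sdiff, Finset.mem_erase]
  constructor
  · rintro ⟨⟨_, h1⟩, h2⟩; exact ⟨h1, h2⟩
  · rintro ⟨h1, h2⟩; exact ⟨⟨fun h => h2 (h ▸ huA), h1⟩, h2⟩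

private lemma erase_sdiff_aux (X A : Finset α) (u : α) :
    (X.erase u) \ A = (X \ A).erase u := by
  ext x
  simp only [Finset.mem_sdiff, Finset.mem_erase]
  tauto

private lemma insert_sdiff_mem_aux (X A : Finset α) {v : α} (hvA : v ∈ A) :
    (insert v X) \ A = X \ A := by
  ext x
  simp only [Finset.mem_sdiff, Finset.mem_insert]
  constructor
  · rintro ⟨rfl | h1, h2⟩
    · exact absurd hvA h2
    · exact ⟨h1, h2⟩
  · rintro ⟨h1, h2⟩; exact ⟨Or.inr h1, h2⟩

private lemma insert_sdiff_notMem_aux (X A : Finset α) {v : α} (hvA : v ∉ A) :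
    (insert v X) \ A = insert v (X \ A) := by
  ext x
  simp only [Finset.mem_sdiff, Finset.mem_insert]
  constructor
  · rintro ⟨rfl | h1, h2⟩
    · exact Or.inl rfl
    · exact Or.inr ⟨h1, h2⟩
  · rintro (rfl | ⟨h1, h2⟩)
    · exact ⟨Or.inl rfl, hvA⟩
    · exact ⟨Or.inr h1, h2⟩

/-- The basic exchange step used everywhere: exchanging at `u ∈ X \ Y` yields a
feasible set of one of three shapes. -/
private lemma exchange_step {D : SetSystem α} (hD : D.IsDeltaMatroid) {X Y : Finset α}
    (hX : X ∈ D.F) (hY : Y ∈ D.F) {u : α} (huX : u ∈ X) (huY : u ∉ Y) :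
    X.erase u ∈ D.F ∨
      (∃ v, v ∈ X ∧ v ∉ Y ∧ v ≠ u ∧ (X.erase u).erase v ∈ D.F) ∨
      (∃ v, v ∈ Y ∧ v ∉ X ∧ insert v (X.erase u) ∈ D.F) := by
  have hu : u ∈ X ∆ Y := Finset.mem_symmDiff.mpr (Or.inl ⟨huX, huY⟩)
  obtain ⟨v, hv, hfeas⟩ := hD.2.2 X hX Y hY u hu
  rw [Finset.mem_symmDiff] at hv
  by_cases hvu : v = u
  · subst hvu
    left
    have hset : X ∆ ({v, v} : Finset α) = X.erase v := by
      ext x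
      simp only [Finset.mem_symmDiff, Finset.mem_insert, Finset.mem_singleton, or_self,
        Finset.mem_erase]
      constructor
      · rintro (⟨h1, h2⟩ | ⟨rfl, h2⟩)
        · exact ⟨h2, h1⟩
        · exact absurd huX h2
      · rintro ⟨h1, h2⟩; exact Or.inl ⟨h2, h1⟩
    rwa [hset] at hfeas
  · rcases hv with ⟨hvX, hvY⟩ | ⟨hvY, hvX⟩
    · right; left
      refine ⟨v, hvX, hvY, hvu, ?_⟩
      have hset : X ∆ ({u, v} : Finset α) = (X.erase u).erase v := by
        ext x
        simp only [Finset.mem_symmDiff, Finset.mem_insert, Finset.mem_singleton,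
          Finset.mem_erase]
        constructor
        · rintro (⟨h1, h2⟩ | ⟨h1, h2⟩)
          · push_neg at h2; exact ⟨h2.2, h2.1, h1⟩
          · rcases h1 with rfl | rfl
            · exact absurd huX h2
            · exact absurd hvX h2
        · rintro ⟨h1, h2, h3⟩
          exact Or.inl ⟨h3, by push_neg; exact ⟨h2, h1⟩⟩
      rwa [hset] at hfeas
    · right; right
      refine ⟨v, hvY, hvX, ?_⟩
      have hset : X ∆ ({u, v} : Finset α) = insert v (X.erase u) := by
        ext x
        simp only [Finset.mem_symmDiff, Finset.mem_insert, Finset.mem_singleton,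
          Finset.mem_erase]
        constructor
        · rintro (⟨h1, h2⟩ | ⟨h1, h2⟩)
          · push_neg at h2; exact Or.inr ⟨h2.1, h1⟩
          · rcases h1 with rfl | rfl
            · exact absurd huX h2
            · exact Or.inl rfl
        · rintro (rfl | ⟨h1, h2⟩)
          · exact Or.inr ⟨Or.inr rfl, hvX⟩
          · refine Or.inl ⟨h2, ?_⟩
            push_neg
            exact ⟨h1, fun hxv => absurd (hxv ▸ h2) hvX⟩
      rwa [hset] at hfeas

/-- The symmetric difference to `Y` strictly shrinks when we trade `u ∈ X \ Y`
for `v ∈ Y \ X`. -/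
private lemma symm_dec {X Y : Finset α} {u v : α} (hu : u ∈ X) (huY : u ∉ Y)
    (hv : v ∈ Y) (hvX : v ∉ X) :
    ((insert v (X.erase u)) ∆ Y).card < (X ∆ Y).card := by
  have hsub : (insert v (X.erase u)) ∆ Y ⊆ (X ∆ Y).erase u := by
    intro x hx
    rw [Finset.mem_symmDiff] at hx
    rw [Finset.mem_erase, Finset.mem_symmDiff]
    rcases hx with ⟨hx1, hx2⟩ | ⟨hx1, hx2⟩
    · have hxv : x ≠ v := fun h => hx2 (h ▸ hv)
      have hx3 : x ∈ X.erase u := Finset.mem_of_mem_insert_of_ne hx1 hxv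
      rw [Finset.mem_erase] at hx3
      exact ⟨hx3.1, Or.inl ⟨hx3.2, hx2⟩⟩
    · have hxu : x ≠ u := fun h => huY (h ▸ hx1)
      have hxX : x ∉ X := fun h =>
        hx2 (Finset.mem_insert_of_mem (Finset.mem_erase.mpr ⟨hxu, h⟩))
      exact ⟨hxu, Or.inr ⟨hx1, hxX⟩⟩
  have hu' : u ∈ X ∆ Y := Finset.mem_symmDiff.mpr (Or.inl ⟨hu, huY⟩)
  calc ((insert v (X.erase u)) ∆ Y).card ≤ ((X ∆ Y).erase u).card :=
        Finset.card_le_card hsub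
    _ < (X ∆ Y).card := Finset.card_erase_lt_of_mem hu'

/-- Forward direction, separating condition. -/
private lemma sep_aux (D : SetSystem α) (hD : D.IsDeltaMatroid) (A : Finset α)
    (hd : ∀ F ∈ D.F, ∀ F' ∈ D.F,
      ((F \ A).card : ℤ) - (F ∩ A).card = ((F' \ A).card : ℤ) - (F' ∩ A).card) :
    ∀ F₁ ∈ D.Fmin, ∀ F₂ ∈ D.Fmin, (F₁ ∩ A) ∪ (F₂ \ A) ∈ D.Fmin := by
  intro F₁ hF₁ F₂ hF₂
  obtain ⟨hF₁F, hmin₁⟩ := Finset.mem_filter.mp hF₁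
  obtain ⟨hF₂F, hmin₂⟩ := Finset.mem_filter.mp hF₂
  have hkey : ∀ X ∈ D.F, X.card = F₁.card → (X ∩ A).card = (F₁ ∩ A).card := by
    intro X hX hc
    have h1 := hd X hX F₁ hF₁F
    have h2 := Finset.card_sdiff_add_card_inter X A
    have h3 := Finset.card_sdiff_add_card_inter F₁ A
    omega
  suffices h : ∀ n : ℕ, ∀ X ∈ D.F, X.card = F₁.card → X \ A = F₂ \ A →
      ((X ∩ A) ∆ (F₁ ∩ A)).card = n → (F₁ ∩ A) ∪ (F₂ \ A) ∈ D.Fmin by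
    exact h _ F₂ hF₂F (le_antisymm (hmin₂ F₁ hF₁F) (hmin₁ F₂ hF₂F)) rfl rfl
  intro n
  induction n using Nat.strong_induction_on with
  | _ n ih =>
    intro X hX hXc hXb hn
    rcases Nat.eq_zero_or_pos n with h0 | hpos
    · have hsd : (X ∩ A) ∆ (F₁ ∩ A) = ⊥ :=
        (Finset.card_eq_zero.mp (by omega)).trans Finset.bot_eq_empty.symm
      have hXA : X ∩ A = F₁ ∩ A := symmDiff_eq_bot.mp hsd
      have hXeq : X = (F₁ ∩ A) ∪ (F₂ \ A) := by
        rw [← hXA, ← hXb]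
        ext x
        simp only [Finset.mem_union, Finset.mem_inter, Finset.mem_sdiff]
        tauto
      rw [← hXeq]
      exact Finset.mem_filter.mpr ⟨hX, fun F' hF' => hXc ▸ hmin₁ F' hF'⟩
    · have hcardXA : (X ∩ A).card = (F₁ ∩ A).card := hkey X hX hXc
      have hne : ¬(X ∩ A ⊆ F₁ ∩ A) := by
        intro hsub
        have heq : X ∩ A = F₁ ∩ A :=
          Finset.eq_of_subset_of_card_le hsub (le_of_eq hcardXA.symm)
        rw [heq, symmDiff_self] at hn
        simp only [Finset.bot_eq_empty, Finset.card_empty] at hn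
        omega
      obtain ⟨u, huXA, huF₁A⟩ := Finset.not_subset.mp hne
      have huX : u ∈ X := (Finset.mem_inter.mp huXA).1
      have huA : u ∈ A := (Finset.mem_inter.mp huXA).2
      have huF₁ : u ∉ F₁ := fun h => huF₁A (Finset.mem_inter.mpr ⟨h, huA⟩)
      have hX1 : 1 ≤ X.card := Finset.card_pos.mpr ⟨u, huX⟩
      rcases exchange_step hD hX hF₁F huX huF₁ with hc1 | ⟨v, hvX, hvF₁, hvu, hc2⟩ |
        ⟨v, hvF₁, hvX, hc3⟩
      · exfalso
        have := hmin₁ _ hc1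
        rw [Finset.card_erase_of_mem huX] at this
        omega
      · exfalso
        have hvXu : v ∈ X.erase u := Finset.mem_erase.mpr ⟨hvu, hvX⟩
        have h2 : 1 ≤ (X.erase u).card := Finset.card_pos.mpr ⟨v, hvXu⟩
        have := hmin₁ _ hc2
        rw [Finset.card_erase_of_mem hvXu, Finset.card_erase_of_mem huX] at this
        rw [Finset.card_erase_of_mem huX] at h2
        omega
      · have hvXu : v ∉ X.erase u := fun h => hvX (Finset.mem_of_mem_erase h)
        have hX'c : (insert v (X.erase u)).card = X.card := by
          rw [Finset.card_insert_of_notMem hvXu, Finset.card_erase_of_mem huX]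
          omega
        by_cases hvA : v ∈ A
        · have hX'b : (insert v (X.erase u)) \ A = F₂ \ A := by
            rw [insert_sdiff_mem_aux _ _ hvA, erase_sdiff_mem_aux _ _ huA, hXb]
          have hX'A : (insert v (X.erase u)) ∩ A = insert v ((X ∩ A).erase u) := by
            rw [Finset.insert_inter_of_mem hvA, erase_inter_aux]
          have hdec : (((insert v (X.erase u)) ∩ A) ∆ (F₁ ∩ A)).card < n := by
            rw [hX'A, ← hn]
            exact symm_dec huXA huF₁A (Finset.mem_inter.mpr ⟨hvF₁, hvA⟩)
              (fun h => hvX (Finset.mem_inter.mp h).1)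
          exact ih _ hdec _ hc3 (hX'c.trans hXc) hX'b rfl
        · exfalso
          have h1 : ((insert v (X.erase u)) ∩ A).card = (F₁ ∩ A).card :=
            hkey _ hc3 (hX'c.trans hXc)
          rw [Finset.insert_inter_of_notMem hvA, erase_inter_aux,
            Finset.card_erase_of_mem huXA] at h1
          have h3 : 1 ≤ (X ∩ A).card := Finset.card_pos.mpr ⟨u, huXA⟩
          omega

/-- Backward direction : the common `|· ∩ A|`-value on `Fmin` is at most the minimum
over all feasible sets. -/
private lemma fmin_inter_le (D : SetSystem α) (hD : D.IsDeltaMatroid) (A : Finset α)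
    {F₀ Fm : Finset α} (hF₀ : F₀ ∈ D.Fmin) (hFm : Fm ∈ D.F)
    (hconst : ∀ Y ∈ D.Fmin, (Y ∩ A).card = (F₀ ∩ A).card) :
    (F₀ ∩ A).card ≤ (Fm ∩ A).card := by
  suffices h : ∀ n : ℕ, ∀ Y ∈ D.Fmin, (Y ∆ Fm).card = n → (Y ∩ A).card ≤ (Fm ∩ A).card by
    exact h _ F₀ hF₀ rfl
  intro n
  induction n using Nat.strong_induction_on with
  | _ n ih =>
    intro Y hY hn
    obtain ⟨hYF, hYmin⟩ := Finset.mem_filter.mp hY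
    by_contra hlt
    push_neg at hlt
    have hns : ¬(Y ∩ A ⊆ Fm ∩ A) := fun hs => absurd (Finset.card_le_card hs) (by omega)
    obtain ⟨u, huYA, huFmA⟩ := Finset.not_subset.mp hns
    have huY : u ∈ Y := (Finset.mem_inter.mp huYA).1
    have huA : u ∈ A := (Finset.mem_inter.mp huYA).2
    have huFm : u ∉ Fm := fun h => huFmA (Finset.mem_inter.mpr ⟨h, huA⟩)
    have hY1 : 1 ≤ Y.card := Finset.card_pos.mpr ⟨u, huY⟩
    rcases exchange_step hD hYF hFm huY huFm with hc1 | ⟨v, hvY, hvFm, hvu, hc2⟩ |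
      ⟨v, hvFm, hvY, hc3⟩
    · have := hYmin _ hc1
      rw [Finset.card_erase_of_mem huY] at this
      omega
    · have hvYu : v ∈ Y.erase u := Finset.mem_erase.mpr ⟨hvu, hvY⟩
      have h2 : 1 ≤ (Y.erase u).card := Finset.card_pos.mpr ⟨v, hvYu⟩
      have := hYmin _ hc2
      rw [Finset.card_erase_of_mem hvYu, Finset.card_erase_of_mem huY] at this
      rw [Finset.card_erase_of_mem huY] at h2
      omega
    · have hvYu : v ∉ Y.erase u := fun h => hvY (Finset.mem_of_mem_erase h)
      have hY'c : (insert v (Y.erase u)).card = Y.card := by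
        rw [Finset.card_insert_of_notMem hvYu, Finset.card_erase_of_mem huY]
        omega
      have hY'min : insert v (Y.erase u) ∈ D.Fmin :=
        Finset.mem_filter.mpr ⟨hc3, fun F' hF' => hY'c ▸ hYmin F' hF'⟩
      have hY'A : (insert v (Y.erase u)) ∩ A = insert v ((Y ∩ A).erase u) ∨
          (insert v (Y.erase u)) ∩ A = (Y ∩ A).erase u := by
        by_cases hvA : v ∈ A
        · exact Or.inl (by rw [Finset.insert_inter_of_mem hvA, erase_inter_aux])
        · exact Or.inr (by rw [Finset.insert_inter_of_notMem hvA, erase_inter_aux])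
      have hconstY' := hconst _ hY'min
      have hconstY := hconst _ hY
      rcases hY'A with hA1 | hA2
      · -- v ∈ A : recurse on smaller symmetric difference
        have hdec : ((insert v (Y.erase u)) ∆ Fm).card < n := by
          rw [← hn]
          exact symm_dec huY huFm hvFm hvY
        have := ih _ hdec _ hY'min rfl
        omega
      · -- v ∉ A : cardinality contradiction
        have h3 : 1 ≤ (Y ∩ A).card := Finset.card_pos.mpr ⟨u, huYA⟩
        rw [hA2, Finset.card_erase_of_mem huYA] at hconstY'
        omega

private lemma measure_lt {a a' s s' W : ℕ} (h1 : a' < a) (h2 : s' ≤ W) :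
    a' * (W + 1) + s' < a * (W + 1) + s := by
  have h3 : (a' + 1) * (W + 1) ≤ a * (W + 1) := Nat.mul_le_mul_right _ h1
  have h4 : a' * (W + 1) + (W + 1) = (a' + 1) * (W + 1) := by ring
  omega

/-- The key chain lemma: if the `|· ∩ A|`-minimal feasible sets all have a common
`d`-value `d₀`, then every feasible set has `d`-value at most `d₀`. -/
private lemma d_le_aux (D : SetSystem α) (hD : D.IsDeltaMatroid) (A : Finset α)
    {Fm : Finset α} (hFm : Fm ∈ D.F) (hm : ∀ F ∈ D.F, (Fm ∩ A).card ≤ (F ∩ A).card)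
    (d₀ : ℤ)
    (hbase : ∀ F ∈ D.F, (F ∩ A).card = (Fm ∩ A).card →
      ((F \ A).card : ℤ) - (F ∩ A).card = d₀) :
    ∀ F ∈ D.F, ((F \ A).card : ℤ) - (F ∩ A).card ≤ d₀ := by
  suffices h : ∀ n : ℕ, ∀ F ∈ D.F, (F ∩ A).card * (D.E.card + 1) + (F ∆ Fm).card = n →
      ((F \ A).card : ℤ) - (F ∩ A).card ≤ d₀ by
    exact fun F hF => h _ F hF rfl
  intro n
  induction n using Nat.strong_induction_on with
  | _ n ih =>
    intro F hF hn
    by_cases hle : (F ∩ A).card ≤ (Fm ∩ A).card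
    · exact le_of_eq (hbase F hF (le_antisymm hle (hm F hF)))
    · push_neg at hle
      have hns : ¬(F ∩ A ⊆ Fm ∩ A) := fun hs => absurd (Finset.card_le_card hs) (by omega)
      obtain ⟨u, huFA, huFmA⟩ := Finset.not_subset.mp hns
      have huF : u ∈ F := (Finset.mem_inter.mp huFA).1
      have huA : u ∈ A := (Finset.mem_inter.mp huFA).2
      have huFm : u ∉ Fm := fun h => huFmA (Finset.mem_inter.mpr ⟨h, huA⟩)
      have haF : 1 ≤ (F ∩ A).card := Finset.card_pos.mpr ⟨u, huFA⟩
      have hmeas : ∀ F' ∈ D.F, (F' ∩ A).card < (F ∩ A).card →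
          (F' ∩ A).card * (D.E.card + 1) + (F' ∆ Fm).card < n := by
        intro F' hF' hlt
        have hsubE : F' ∆ Fm ⊆ D.E := by
          intro x hx
          rw [Finset.mem_symmDiff] at hx
          rcases hx with ⟨h1, _⟩ | ⟨h1, _⟩
          · exact hD.2.1 F' hF' h1
          · exact hD.2.1 Fm hFm h1
        have hW : (F' ∆ Fm).card ≤ D.E.card := Finset.card_le_card hsubE
        exact hn ▸ measure_lt hlt hW
      rcases exchange_step hD hF hFm huF huFm with hc1 | ⟨v, hvF, hvFm, hvu, hc2⟩ |
        ⟨v, hvFm, hvF, hc3⟩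
      · -- F' = F.erase u : (a-1, b)
        have ha' : ((F.erase u) ∩ A).card + 1 = (F ∩ A).card := by
          rw [erase_inter_aux, Finset.card_erase_of_mem huFA]
          omega
        have hb' : (F.erase u) \ A = F \ A := erase_sdiff_mem_aux _ _ huA
        have hih := ih _ (hmeas _ hc1 (by omega)) _ hc1 rfl
        rw [hb'] at hih
        omega
      · -- F' = (F.erase u).erase v with v ∈ F \ Fm, v ≠ u
        have hFA : ((F.erase u).erase v) ∩ A = ((F ∩ A).erase u).erase v := by
          rw [erase_inter_aux, erase_inter_aux]
        have hFb : ((F.erase u).erase v) \ A = ((F \ A).erase u).erase v := by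
          rw [erase_sdiff_aux, erase_sdiff_aux]
        by_cases hvA : v ∈ A
        · have hv1 : v ∈ (F ∩ A).erase u :=
            Finset.mem_erase.mpr ⟨hvu, Finset.mem_inter.mpr ⟨hvF, hvA⟩⟩
          have ha' : (((F.erase u).erase v) ∩ A).card + 2 = (F ∩ A).card := by
            rw [hFA, Finset.card_erase_of_mem hv1, Finset.card_erase_of_mem huFA]
            have : 1 ≤ ((F ∩ A).erase u).card := Finset.card_pos.mpr ⟨v, hv1⟩
            rw [Finset.card_erase_of_mem huFA] at this
            omega
          have hb' : ((F.erase u).erase v) \ A = F \ A := by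
            rw [erase_sdiff_mem_aux _ _ hvA, erase_sdiff_mem_aux _ _ huA]
          have hih := ih _ (hmeas _ hc2 (by omega)) _ hc2 rfl
          rw [hb'] at hih
          omega
        · have ha' : (((F.erase u).erase v) ∩ A).card + 1 = (F ∩ A).card := by
            have hv2 : v ∉ (F ∩ A).erase u :=
              fun h => hvA (Finset.mem_inter.mp (Finset.mem_of_mem_erase h)).2
            rw [hFA, Finset.erase_eq_of_notMem hv2, Finset.card_erase_of_mem huFA]
            omega
          have hvFb : v ∈ (F \ A).erase u :=
            Finset.mem_erase.mpr ⟨hvu, Finset.mem_sdiff.mpr ⟨hvF, hvA⟩⟩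
          have hu_nm : u ∉ F \ A := fun h => (Finset.mem_sdiff.mp h).2 huA
          have hb' : (((F.erase u).erase v) \ A).card + 1 = (F \ A).card := by
            rw [hFb, Finset.erase_eq_of_notMem hu_nm, Finset.card_erase_of_mem
              (Finset.mem_sdiff.mpr ⟨hvF, hvA⟩)]
            have : 1 ≤ (F \ A).card := Finset.card_pos.mpr ⟨v, Finset.mem_sdiff.mpr ⟨hvF, hvA⟩⟩
            omega
          have hih := ih _ (hmeas _ hc2 (by omega)) _ hc2 rfl
          omega
      · -- F' = insert v (F.erase u) with v ∈ Fm \ F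
        have hvFu : v ∉ F.erase u := fun h => hvF (Finset.mem_of_mem_erase h)
        by_cases hvA : v ∈ A
        · -- (a, b) unchanged, symmetric difference decreases
          have ha' : (insert v (F.erase u)) ∩ A = insert v ((F ∩ A).erase u) := by
            rw [Finset.insert_inter_of_mem hvA, erase_inter_aux]
          have hacard : ((insert v (F.erase u)) ∩ A).card = (F ∩ A).card := by
            rw [ha', Finset.card_insert_of_notMem
              (fun h => hvF (Finset.mem_inter.mp (Finset.mem_of_mem_erase h)).1),
              Finset.card_erase_of_mem huFA]
            omega
          have hbset : (insert v (F.erase u)) \ A = F \ A := by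
            rw [insert_sdiff_mem_aux _ _ hvA, erase_sdiff_mem_aux _ _ huA]
          have hdec : ((insert v (F.erase u)) ∆ Fm).card < (F ∆ Fm).card :=
            symm_dec huF huFm hvFm hvF
          have hmeas' : ((insert v (F.erase u)) ∩ A).card * (D.E.card + 1) +
              ((insert v (F.erase u)) ∆ Fm).card < n := by
            rw [hacard, ← hn]
            omega
          have hih := ih _ hmeas' _ hc3 rfl
          rw [hbset, hacard] at hih
          exact hih
        · -- (a-1, b+1)
          have ha' : ((insert v (F.erase u)) ∩ A).card + 1 = (F ∩ A).card := by
            rw [Finset.insert_inter_of_notMem hvA, erase_inter_aux,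
              Finset.card_erase_of_mem huFA]
            omega
          have hb' : ((insert v (F.erase u)) \ A).card = (F \ A).card + 1 := by
            rw [insert_sdiff_notMem_aux _ _ hvA, erase_sdiff_mem_aux _ _ huA,
              Finset.card_insert_of_notMem (fun h => hvF (Finset.mem_sdiff.mp h).1)]
          have hih := ih _ (hmeas _ hc3 (by omega)) _ hc3 rfl
          omega


private lemma inter_sdiff_of_subset {F E A : Finset α} (hF : F ⊆ E) :
    F ∩ (E \ A) = F \ A := by
  ext x
  simp only [Finset.mem_inter, Finset.mem_sdiff]
  constructor
  · rintro ⟨h1, _, h3⟩; exact ⟨h1, h3⟩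
  · rintro ⟨h1, h2⟩; exact ⟨h1, hF h1, h2⟩

private lemma sdiff_sdiff_of_subset {F E A : Finset α} (hF : F ⊆ E) :
    F \ (E \ A) = F ∩ A := by
  ext x
  simp only [Finset.mem_sdiff, Finset.mem_inter]
  constructor
  · rintro ⟨h1, h2⟩
    refine ⟨h1, ?_⟩
    by_contra h3
    exact h2 ⟨hF h1, h3⟩
  · rintro ⟨h1, h2⟩
    exact ⟨h1, fun h => h.2 h2⟩

end AuxLemmas

/-- For a nonempty proper subset `A` of the ground set, the twist `D*A` is a matroid
iff `A` is separating in `D_min` and both `D∖A` and `D∖(E−A)` are matroids. -/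
theorem twist_isMatroid_iff (D : SetSystem α) (hD : D.IsDeltaMatroid)
    (A : Finset α) (hAE : A ⊆ D.E) (hne : A.Nonempty) (hproper : A ≠ D.E) :
    (∀ F₁ ∈ D.F, ∀ F₂ ∈ D.F, (A ∆ F₁).card = (A ∆ F₂).card) ↔
      ((∀ F₁ ∈ D.Fmin, ∀ F₂ ∈ D.Fmin, (F₁ ∩ A) ∪ (F₂ \ A) ∈ D.Fmin) ∧
        (∀ G₁ ∈ D.delFam A, ∀ G₂ ∈ D.delFam A, G₁.card = G₂.card) ∧
        (∀ G₁ ∈ D.delFam (D.E \ A), ∀ G₂ ∈ D.delFam (D.E \ A), G₁.card = G₂.card)) := by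
  have hsub := hD.2.1
  constructor
  · -- forward direction
    intro hcard
    have hd : ∀ F ∈ D.F, ∀ F' ∈ D.F,
        ((F \ A).card : ℤ) - (F ∩ A).card = ((F' \ A).card : ℤ) - (F' ∩ A).card := by
      intro F hF F' hF'
      have h1 := symmDiff_card_aux A F
      have h2 := symmDiff_card_aux A F'
      have h3 := hcard F hF F' hF'
      omega
    refine ⟨sep_aux D hD A hd, ?_, ?_⟩
    · intro G₁ hG₁ G₂ hG₂
      rw [delFam, Finset.mem_image] at hG₁ hG₂
      obtain ⟨F₁, hF₁, rfl⟩ := hG₁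
      obtain ⟨F₂, hF₂, rfl⟩ := hG₂
      obtain ⟨hF₁F, hm₁⟩ := Finset.mem_filter.mp hF₁
      obtain ⟨hF₂F, hm₂⟩ := Finset.mem_filter.mp hF₂
      have ha : (F₁ ∩ A).card = (F₂ ∩ A).card :=
        le_antisymm (hm₁ F₂ hF₂F) (hm₂ F₁ hF₁F)
      have := hd F₁ hF₁F F₂ hF₂F
      omega
    · intro G₁ hG₁ G₂ hG₂
      rw [delFam, Finset.mem_image] at hG₁ hG₂
      obtain ⟨F₁, hF₁, rfl⟩ := hG₁
      obtain ⟨F₂, hF₂, rfl⟩ := hG₂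
      obtain ⟨hF₁F, hm₁⟩ := Finset.mem_filter.mp hF₁
      obtain ⟨hF₂F, hm₂⟩ := Finset.mem_filter.mp hF₂
      rw [inter_sdiff_of_subset (hsub F₁ hF₁F)] at hm₁
      rw [inter_sdiff_of_subset (hsub F₂ hF₂F)] at hm₂
      have hb : (F₁ \ A).card = (F₂ \ A).card := by
        refine le_antisymm ?_ ?_
        · have := hm₁ F₂ hF₂F; rwa [inter_sdiff_of_subset (hsub F₂ hF₂F)] at this
        · have := hm₂ F₁ hF₁F; rwa [inter_sdiff_of_subset (hsub F₁ hF₁F)] at this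
      rw [sdiff_sdiff_of_subset (hsub F₁ hF₁F), sdiff_sdiff_of_subset (hsub F₂ hF₂F)]
      have := hd F₁ hF₁F F₂ hF₂F
      omega
  · -- backward direction
    rintro ⟨h1, h2, h3⟩
    obtain ⟨F₀, hF₀F, hF₀min⟩ := Finset.exists_min_image D.F Finset.card hD.1
    have hF₀ : F₀ ∈ D.Fmin := Finset.mem_filter.mpr ⟨hF₀F, hF₀min⟩
    -- all members of Fmin have the same split
    have hsplit : ∀ Y ∈ D.Fmin, (Y ∩ A).card = (F₀ ∩ A).card ∧
        (Y \ A).card = (F₀ \ A).card := by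
      intro Y hY
      obtain ⟨hYF, hYmin⟩ := Finset.mem_filter.mp hY
      have hcards : Y.card = F₀.card := le_antisymm (hYmin F₀ hF₀F) (hF₀min Y hYF)
      have hG := h1 Y hY F₀ hF₀
      obtain ⟨hGF, hGmin⟩ := Finset.mem_filter.mp hG
      have hGcard : ((Y ∩ A) ∪ (F₀ \ A)).card = F₀.card :=
        le_antisymm (hGmin F₀ hF₀F) (hF₀min _ hGF)
      have hdisj : Disjoint (Y ∩ A) (F₀ \ A) := by
        rw [Finset.disjoint_left]
        intro x hx hx'
        exact (Finset.mem_sdiff.mp hx').2 (Finset.mem_inter.mp hx).2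
      rw [Finset.card_union_of_disjoint hdisj] at hGcard
      have hY2 := Finset.card_sdiff_add_card_inter Y A
      have hF2 := Finset.card_sdiff_add_card_inter F₀ A
      omega
    have hsplitA : ∀ Y ∈ D.Fmin, (Y ∩ A).card = (F₀ ∩ A).card :=
      fun Y hY => (hsplit Y hY).1
    have hsplitA' : ∀ Y ∈ D.Fmin, (Y ∩ (D.E \ A)).card = (F₀ ∩ (D.E \ A)).card := by
      intro Y hY
      rw [inter_sdiff_of_subset (hsub Y (Finset.mem_filter.mp hY).1),
        inter_sdiff_of_subset (hsub F₀ hF₀F)]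
      exact (hsplit Y hY).2
    obtain ⟨Fm, hFmF, hFmmin⟩ := Finset.exists_min_image D.F (fun F => (F ∩ A).card) hD.1
    obtain ⟨Fn, hFnF, hFnmin⟩ :=
      Finset.exists_min_image D.F (fun F => (F ∩ (D.E \ A)).card) hD.1
    have ha₀ : (F₀ ∩ A).card = (Fm ∩ A).card :=
      le_antisymm (fmin_inter_le D hD A hF₀ hFmF hsplitA) (hFmmin F₀ hF₀F)
    have hb₀ : (F₀ ∩ (D.E \ A)).card = (Fn ∩ (D.E \ A)).card :=
      le_antisymm (fmin_inter_le D hD (D.E \ A) hF₀ hFnF hsplitA') (hFnmin F₀ hF₀F)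
    have hb₀' : (F₀ \ A).card = (Fn \ A).card := by
      rw [← inter_sdiff_of_subset (hsub F₀ hF₀F), ← inter_sdiff_of_subset (hsub Fn hFnF)]
      exact hb₀
    -- base case for the ∩A chain
    have hbase1 : ∀ F ∈ D.F, (F ∩ A).card = (Fm ∩ A).card →
        ((F \ A).card : ℤ) - (F ∩ A).card = ((F₀ \ A).card : ℤ) - (F₀ ∩ A).card := by
      intro F hF hFa
      have hFdel : F \ A ∈ D.delFam A := by
        rw [delFam, Finset.mem_image]
        exact ⟨F, Finset.mem_filter.mpr ⟨hF, fun F' hF' => hFa ▸ hFmmin F' hF'⟩, rfl⟩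
      have hF₀del : F₀ \ A ∈ D.delFam A := by
        rw [delFam, Finset.mem_image]
        exact ⟨F₀, Finset.mem_filter.mpr ⟨hF₀F, fun F' hF' => ha₀ ▸ hFmmin F' hF'⟩, rfl⟩
      have hbb := h2 _ hFdel _ hF₀del
      omega
    have hle := d_le_aux D hD A hFmF hFmmin _ hbase1
    -- base case for the ∩(E\A) chain
    have hbase2 : ∀ F ∈ D.F, (F ∩ (D.E \ A)).card = (Fn ∩ (D.E \ A)).card →
        ((F \ (D.E \ A)).card : ℤ) - (F ∩ (D.E \ A)).card =
          ((F₀ ∩ A).card : ℤ) - (F₀ \ A).card := by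
      intro F hF hFb
      have hFdel : F \ (D.E \ A) ∈ D.delFam (D.E \ A) := by
        rw [delFam, Finset.mem_image]
        exact ⟨F, Finset.mem_filter.mpr ⟨hF, fun F' hF' => hFb ▸ hFnmin F' hF'⟩, rfl⟩
      have hF₀del : F₀ \ (D.E \ A) ∈ D.delFam (D.E \ A) := by
        rw [delFam, Finset.mem_image]
        exact ⟨F₀, Finset.mem_filter.mpr ⟨hF₀F, fun F' hF' => hb₀ ▸ hFnmin F' hF'⟩, rfl⟩
      have haa := h3 _ hFdel _ hF₀del
      rw [sdiff_sdiff_of_subset (hsub F hF), sdiff_sdiff_of_subset (hsub F₀ hF₀F)] at haa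
      rw [sdiff_sdiff_of_subset (hsub F hF), inter_sdiff_of_subset (hsub F hF)]
      rw [inter_sdiff_of_subset (hsub F hF), inter_sdiff_of_subset (hsub Fn hFnF),
        ← hb₀'] at hFb
      omega
    have hge := d_le_aux D hD (D.E \ A) hFnF hFnmin _ hbase2
    -- conclude
    intro F₁ hF₁ F₂ hF₂
    have e1 := hle F₁ hF₁
    have e2 := hle F₂ hF₂
    have g1 := hge F₁ hF₁
    have g2 := hge F₂ hF₂
    rw [sdiff_sdiff_of_subset (hsub F₁ hF₁), inter_sdiff_of_subset (hsub F₁ hF₁)] at g1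
    rw [sdiff_sdiff_of_subset (hsub F₂ hF₂), inter_sdiff_of_subset (hsub F₂ hF₂)] at g2
    have s1 := symmDiff_card_aux A F₁
    have s2 := symmDiff_card_aux A F₂
    omega

end SetSystem
end

section
/- Let M be a matroid on a finite ground set E with rank function r, and let A ⊆ E. Then all members of the family {A △ B : B a base of M} have the same cardinality (i.e. the twist M*A is a matroid) if and only if r(A) + r(E − A) = r(E); equivalently, if and only if A is separating in M or A ∈ {∅, E}. -/
open scoped symmDiff Matroid

namespace PaperMatroid

variable {α : Type}

/-- In a finite matroid, an independent subset of `X` has cardinality at most that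
of any basis of `X`. -/
lemma ncard_le_of_basis {M : Matroid α} [M.Finite] {I J X : Set α}
    (hI : M.IsBasis I X) (hJ : M.Indep J) (hJX : J ⊆ X) : J.ncard ≤ I.ncard := by
  obtain ⟨J', hJ', hJJ'⟩ := hJ.subset_isBasis_of_subset hJX hI.subset_ground
  have hcard := hJ'.encard_eq_encard hI
  have h1 : J'.ncard = I.ncard := by rw [Set.ncard_def, hcard, ← Set.ncard_def]
  exact le_trans (Set.ncard_le_ncard hJJ' (M.set_finite J' hJ'.left_subset_ground)) h1.le

/-- In a finite matroid, `rkFn M X` equals the cardinality of any basis of `X`. -/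
lemma rkFn_eq_of_basis {M : Matroid α} [M.Finite] {I X : Set α}
    (hI : M.IsBasis I X) : rkFn M X = I.ncard := by
  have hmem : I.ncard ∈ {n : ℕ | ∃ J, M.Indep J ∧ J ⊆ X ∧ n = J.ncard} :=
    ⟨I, hI.indep, hI.subset, rfl⟩
  have hub : ∀ n ∈ {n : ℕ | ∃ J, M.Indep J ∧ J ⊆ X ∧ n = J.ncard}, n ≤ I.ncard := by
    rintro n ⟨J, hJ, hJX, rfl⟩
    exact ncard_le_of_basis hI hJ hJX
  exact le_antisymm (csSup_le ⟨_, hmem⟩ hub) (le_csSup ⟨I.ncard, hub⟩ hmem)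

/-- Cardinality identity for the symmetric difference with a base. -/
lemma symmDiff_ncard_eq {M : Matroid α} [M.Finite] {A B : Set α}
    (hA : A ⊆ M.E) (hB : M.IsBase B) :
    (A ∆ B).ncard + 2 * (A ∩ B).ncard = A.ncard + B.ncard := by
  have hAfin : A.Finite := M.set_finite A hA
  have hBfin : B.Finite := M.set_finite B hB.subset_ground
  have h1 : (A ∆ B).ncard = (A \ B).ncard + (B \ A).ncard := by
    rw [Set.symmDiff_def]
    exact Set.ncard_union_eq disjoint_sdiff_sdiff hAfin.diff hBfin.diff
  have h2 := Set.ncard_inter_add_ncard_diff_eq_ncard A B hAfin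
  have h3 := Set.ncard_inter_add_ncard_diff_eq_ncard B A hBfin
  rw [Set.inter_comm B A] at h3
  omega

/-- The twist `M*A` is a matroid (its feasible sets `{A ∆ B : B a base of M}` are
equicardinal) iff `r(A) + r(E − A) = r(E)`, i.e. iff `A` is separating in `M` or
`A ∈ {∅, E}`. -/
theorem twist_isMatroid_iff_rank (M : Matroid α) [M.Finite] (A : Set α) (hA : A ⊆ M.E) :
    (∀ B₁ B₂, M.IsBase B₁ → M.IsBase B₂ → (A ∆ B₁).ncard = (A ∆ B₂).ncard) ↔
      rkFn M A + rkFn M (M.E \ A) = rkFn M M.E := by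
  obtain ⟨I, hI⟩ := M.exists_isBasis A hA
  obtain ⟨J, hJ⟩ := M.exists_isBasis (M.E \ A) Set.diff_subset
  rw [rkFn_eq_of_basis hI, rkFn_eq_of_basis hJ]
  -- For any base B, A ∩ B and B \ A are independent subsets of A and E \ A.
  have hinter : ∀ B, M.IsBase B → (A ∩ B).ncard ≤ I.ncard := fun B hB ↦
    ncard_le_of_basis hI (hB.indep.subset Set.inter_subset_right) Set.inter_subset_left
  have hdiffsub : ∀ B, M.IsBase B → B \ A ⊆ M.E \ A := fun B hB ↦
    Set.diff_subset_diff_left hB.subset_ground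
  have hdiff : ∀ B, M.IsBase B → (B \ A).ncard ≤ J.ncard := fun B hB ↦
    ncard_le_of_basis hJ (hB.indep.subset Set.diff_subset) (hdiffsub B hB)
  have hsplit : ∀ B, M.IsBase B → (A ∩ B).ncard + (B \ A).ncard = B.ncard := by
    intro B hB
    have := Set.ncard_inter_add_ncard_diff_eq_ncard B A (M.set_finite B hB.subset_ground)
    rw [Set.inter_comm B A] at this
    exact this
  constructor
  · intro h
    -- extend I to a base B₁ and J to a base B₂
    obtain ⟨B₁, hB₁, hIB₁⟩ := hI.indep.exists_isBase_superset
    obtain ⟨B₂, hB₂, hJB₂⟩ := hJ.indep.exists_isBase_superset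
    rw [rkFn_eq_of_basis hB₂.isBasis_ground]
    have hAB₁ : (A ∩ B₁).ncard = I.ncard := by
      refine le_antisymm (hinter B₁ hB₁) ?_
      exact Set.ncard_le_ncard (Set.subset_inter hI.subset hIB₁)
        (M.set_finite _ (Set.inter_subset_left.trans hA))
    have hJB₂' : J ⊆ B₂ \ A := Set.subset_diff.mpr
      ⟨hJB₂, (Set.subset_diff.mp hJ.subset).2⟩
    have hB₂A : (B₂ \ A).ncard = J.ncard := by
      refine le_antisymm (hdiff B₂ hB₂) ?_
      exact Set.ncard_le_ncard hJB₂'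
        (M.set_finite _ ((hdiffsub B₂ hB₂).trans Set.diff_subset))
    have heq := h B₁ B₂ hB₁ hB₂
    have hc1 := symmDiff_ncard_eq hA hB₁
    have hc2 := symmDiff_ncard_eq hA hB₂
    have hbb : B₁.ncard = B₂.ncard := hB₁.ncard_eq_ncard_of_isBase hB₂
    have hs1 := hsplit B₁ hB₁
    have hs2 := hsplit B₂ hB₂
    omega
  · intro h
    intro B₁ B₂ hB₁ hB₂
    rw [rkFn_eq_of_basis hB₁.isBasis_ground] at h
    have hbb : B₁.ncard = B₂.ncard := hB₁.ncard_eq_ncard_of_isBase hB₂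
    have h1 := hinter B₁ hB₁
    have h2 := hinter B₂ hB₂
    have h3 := hdiff B₁ hB₁
    have h4 := hdiff B₂ hB₂
    have hs1 := hsplit B₁ hB₁
    have hs2 := hsplit B₂ hB₂
    have hc1 := symmDiff_ncard_eq hA hB₁
    have hc2 := symmDiff_ncard_eq hA hB₂
    omega

end PaperMatroid
end
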